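/- Let K be an induced weighted oriented subgraph of a weighted oriented graph D. Then the following are equivalent: (1) there is a strong vertex cover C of D such that V(K) ⊆ C; (2) K has a generating ⋆-semi-forest. -/

import Mathlib

/-! ## Weighted oriented graphs -/

/-- A weighted oriented graph `D = (G, 𝒪, w)`: an orientation of a finite simple
graph together with a weight function, where sources have weight `1`. -/
structure WOGraph (V : Type) where
  /-- the set of directed edges -/
  E : V → V → Prop
  irrefl : ∀ x, ¬ E x x
  asymm : ∀ x y, E x y → ¬ E y x
  /-- the weight function -/
  w : V → ℕ
  w_pos : ∀ x, 1 ≤ w x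
  source_one : ∀ x, (∀ y, ¬ E y x) → w x = 1

namespace WOGraph

variable {V : Type}

/-- The underlying simple graph `G` of `D`. -/
def graph (D : WOGraph V) : SimpleGraph V := SimpleGraph.fromRel D.E

/-- Out-neighbourhood `N⁺_D(x)`. -/
def outN (D : WOGraph V) (x : V) : Set V := {y | D.E x y}

/-- In-neighbourhood `N⁻_D(x)`. -/
def inN (D : WOGraph V) (x : V) : Set V := {y | D.E y x}

/-- Neighbourhood `N_D(x)`. -/
def nbr (D : WOGraph V) (x : V) : Set V := {y | D.E x y ∨ D.E y x}

/-- `N_D(A)` for a set `A` of vertices. -/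
def nbrS (D : WOGraph V) (A : Set V) : Set V := {y | ∃ a ∈ A, y ∈ D.nbr a}

/-- `N⁺_D(A)` for a set `A` of vertices. -/
def outNS (D : WOGraph V) (A : Set V) : Set V := {y | ∃ a ∈ A, D.E a y}

/-- `V⁺`, the set of vertices of weight `> 1`. -/
def Vplus (D : WOGraph V) : Set V := {x | 1 < D.w x}

/-- A vertex cover of `D`. -/
def IsVC (D : WOGraph V) (C : Set V) : Prop := ∀ u v, D.E u v → u ∈ C ∨ v ∈ C

/-- `L₁(C)`. -/
def L1 (D : WOGraph V) (C : Set V) : Set V := {x | x ∈ C ∧ ∃ y, D.E x y ∧ y ∉ C}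

/-- `L₂(C)`. -/
def L2 (D : WOGraph V) (C : Set V) : Set V :=
  {x | x ∈ C ∧ x ∉ D.L1 C ∧ ∃ y, D.E y x ∧ y ∉ C}

/-- `L₃(C)`. -/
def L3 (D : WOGraph V) (C : Set V) : Set V := {x | x ∈ C ∧ x ∉ D.L1 C ∧ x ∉ D.L2 C}

/-- A strong vertex cover of `D`. -/
def IsStrongVC (D : WOGraph V) (C : Set V) : Prop :=
  D.IsVC C ∧ ∀ x ∈ D.L3 C, ∃ y, D.E y x ∧ y ∈ C ∧ y ∉ D.L1 C ∧ 1 < D.w y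

/-- A weighted oriented subgraph of `D`. -/
structure OSub (D : WOGraph V) where
  verts : Set V
  E : V → V → Prop
  sub : ∀ u v, E u v → D.E u v
  memL : ∀ u v, E u v → u ∈ verts
  memR : ∀ u v, E u v → v ∈ verts

namespace OSub

variable {D : WOGraph V}

/-- The underlying simple graph of a weighted oriented subgraph. -/
def graph (H : D.OSub) : SimpleGraph V := SimpleGraph.fromRel H.E

/-- Neighbourhood inside the subgraph. -/
def nbr (H : D.OSub) (x : V) : Set V := {y | H.E x y ∨ H.E y x}

/-- Degree inside the subgraph. -/
noncomputable def deg (H : D.OSub) (x : V) : ℕ := (H.nbr x).ncard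

/-- `H` is contained in `K`. -/
def le (H K : D.OSub) : Prop := H.verts ⊆ K.verts ∧ ∀ u v, H.E u v → K.E u v

end OSub

/-- The induced weighted oriented subgraph on a set `A` of vertices. -/
def induced (D : WOGraph V) (A : Set V) : D.OSub where
  verts := A
  E u v := D.E u v ∧ u ∈ A ∧ v ∈ A
  sub _ _ h := h.1
  memL _ _ h := h.2.1
  memR _ _ h := h.2.2

/-- `K` is an induced weighted oriented subgraph of `D`. -/
def IsInducedSub {D : WOGraph V} (K : D.OSub) : Prop :=
  ∀ u v, D.E u v → u ∈ K.verts → v ∈ K.verts → K.E u v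

/-- A root oriented tree (ROT) with parent `v`. -/
def IsROT (D : WOGraph V) (T : D.OSub) (v : V) : Prop :=
  v ∈ T.verts ∧ T.graph.IsAcyclic ∧
  (∀ x ∈ T.verts, Relation.ReflTransGen T.E v x) ∧
  (∀ x ∈ T.verts, D.w x = 1 → (T.deg x = 1 ∧ x ≠ v) ∨ (T.verts = {v} ∧ x = v))

/-- A unicycle oriented subgraph whose (unique) cycle has vertex set `Cs`. -/
def IsUnicycle (D : WOGraph V) (B : D.OSub) (Cs : Set V) : Prop :=
  (∃ (n : ℕ) (f : ZMod n → V), 3 ≤ n ∧ Function.Injective f ∧ Set.range f = Cs ∧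
      ∀ i, B.E (f i) (f (i + 1))) ∧
  (∀ (a : V) (p : B.graph.Walk a a), p.IsCycle → {x | x ∈ p.support} = Cs) ∧
  (∀ y ∈ B.verts, y ∉ Cs → ∃ x ∈ Cs, Relation.ReflTransGen B.E x y) ∧
  (∀ x ∈ B.verts, D.w x = 1 → B.deg x = 1)

/-- A `⋆`-semi-forest structure on a weighted oriented subgraph `H` of `D`. -/
structure SSF (D : WOGraph V) (H : D.OSub) where
  r : ℕ
  s : ℕ
  T : Fin r → D.OSub
  parent : Fin r → V
  B : Fin s → D.OSub
  Cs : Fin s → Set V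
  hT : ∀ i, D.IsROT (T i) (parent i)
  hB : ∀ j, D.IsUnicycle (B j) (Cs j)
  hverts : H.verts = (⋃ i, (T i).verts) ∪ (⋃ j, (B j).verts)
  hE : ∀ u v, H.E u v ↔ ((∃ i, (T i).E u v) ∨ (∃ j, (B j).E u v))
  hTT : ∀ i i', i ≠ i' → Disjoint (T i).verts (T i').verts
  hBB : ∀ j j', j ≠ j' → Disjoint (B j).verts (B j').verts
  hTB : ∀ i j, Disjoint (T i).verts (B j).verts
  wv : Fin r → V
  hwv_not : ∀ i, wv i ∉ H.verts
  hwv_nbr : ∀ i, wv i ∈ D.nbr (parent i)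
  W1 : Set V
  W2 : Set V
  hW_union : W1 ∪ W2 = Set.range wv
  hW_disj : Disjoint W1 W2
  hW1_stable : ∀ x ∈ W1, ∀ y ∈ W1, ¬ D.graph.Adj x y
  hW2_plus : W2 ⊆ D.Vplus
  hW2_edge : ∀ i, wv i ∈ W2 → D.E (wv i) (parent i)
  hW1_out : D.outNS (W2 ∪ ({x | x ∈ H.verts ∧ 2 ≤ H.deg x} ∪
      {x | (∃ i, parent i = x) ∧ H.deg x = 1})) ∩ W1 = ∅

/-- The set `H̃` associated with a `⋆`-semi-forest. -/
noncomputable def SSF.tilde {D : WOGraph V} {H : D.OSub} (F : D.SSF H) : Set V :=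
  {x | x ∈ H.verts ∧ 2 ≤ H.deg x} ∪ {x | (∃ i, F.parent i = x) ∧ H.deg x = 1}

/-- `K` has a generating `⋆`-semi-forest. -/
def HasGenSSF (D : WOGraph V) (K : D.OSub) : Prop :=
  ∃ H : D.OSub, Nonempty (D.SSF H) ∧ H.verts = K.verts

/-- The `⋆`-condition for a 5-tuple `(a', a, b, b', c)` written along an induced 5-cycle. -/
def StarCond (D : WOGraph V) (a' a b b' c : V) : Prop :=
  (D.E a' a ∧ D.w a' = 1) ∧
  (D.inN a ⊆ D.nbr c ∧ D.inN a ∩ D.Vplus ⊆ D.inN c) ∧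
  (D.nbr b' ⊆ D.nbr a' ∪ D.outN a ∧ D.inN b' ∩ D.Vplus ⊆ D.inN a')

/-- The `⋆`-property for an induced 5-cycle `z 0, z 1, z 2, z 3, z 4`. -/
def HasStarProp (D : WOGraph V) (z : Fin 5 → V) : Prop :=
  ∀ i : Fin 5,
    (D.E (z i) (z (i + 1)) ∧ 1 < D.w (z i) →
      StarCond D (z (i - 1)) (z i) (z (i + 1)) (z (i + 2)) (z (i + 3))) ∧
    (D.E (z (i + 1)) (z i) ∧ 1 < D.w (z (i + 1)) →
      StarCond D (z (i + 2)) (z (i + 1)) (z i) (z (i - 1)) (z (i - 2)))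

/-- The edge ideal `I(D)` of a weighted oriented graph in `k[x_v : v ∈ V]`. -/
noncomputable def edgeIdeal (k : Type) [Field k] (D : WOGraph V) : Ideal (MvPolynomial V k) :=
  Ideal.span {f | ∃ u v, D.E u v ∧ f = MvPolynomial.X u * MvPolynomial.X v ^ D.w v}

end WOGraph

/-! ## Generic graph notions -/

/-- A vertex cover of a simple graph. -/
def gVC {W : Type} (G : SimpleGraph W) (C : Set W) : Prop :=
  ∀ u v, G.Adj u v → u ∈ C ∨ v ∈ C

/-- The vertex cover number `τ(G)`. -/
noncomputable def tau {W : Type} (G : SimpleGraph W) : ℕ :=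
  sInf {n | ∃ C : Set W, gVC G C ∧ C.ncard = n}

/-- A stable (independent) set. -/
def Stable {W : Type} (G : SimpleGraph W) (S : Set W) : Prop :=
  ∀ x ∈ S, ∀ y ∈ S, ¬ G.Adj x y

/-- `G` is well-covered: all maximal stable sets have the same cardinality. -/
def WellCovered {W : Type} (G : SimpleGraph W) : Prop :=
  ∀ S T : Set W, Maximal (Stable G) S → Maximal (Stable G) T → S.ncard = T.ncard

/-- `e` is (the vertex set of) an edge of `G`. -/
def IsEdgeSet {W : Type} (G : SimpleGraph W) (e : Set W) : Prop :=
  ∃ u v, G.Adj u v ∧ e = {u, v}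

/-- An edge `e = {b, b'}` has the property (P). -/
def PropP {W : Type} (G : SimpleGraph W) (e : Set W) : Prop :=
  ∀ a b a' b', e = {b, b'} → G.Adj a b → G.Adj a' b' → a ∉ e → a' ∉ e → G.Adj a a'

/-- A matching of `G`, as a set of (vertex sets of) edges. -/
def IsMatchingSet {W : Type} (G : SimpleGraph W) (M : Set (Set W)) : Prop :=
  (∀ e ∈ M, IsEdgeSet G e) ∧ M.Pairwise Disjoint

/-- A perfect matching of `G`. -/
def IsPerfectMatchingSet {W : Type} (G : SimpleGraph W) (M : Set (Set W)) : Prop :=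
  IsMatchingSet G M ∧ ⋃₀ M = Set.univ

/-- The matching number `ν(G)`. -/
noncomputable def nu {W : Type} (G : SimpleGraph W) : ℕ :=
  sSup {n | ∃ M, IsMatchingSet G M ∧ M.ncard = n}

/-- The degree of a vertex. -/
noncomputable def gdeg {W : Type} (G : SimpleGraph W) (x : W) : ℕ := (G.neighborSet x).ncard

/-- `v` is a simplicial vertex: its closed neighbourhood is a clique. -/
def IsSimplicialVtx {W : Type} (G : SimpleGraph W) (v : W) : Prop :=
  G.IsClique (insert v (G.neighborSet v))

/-- The set `S_G` of (vertex sets of) simplexes of `G`. -/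
def SimplexSets {W : Type} (G : SimpleGraph W) : Set (Set W) :=
  {S | ∃ v, IsSimplicialVtx G v ∧ S = insert v (G.neighborSet v)}

/-- `G` is a simplicial graph. -/
def SimplicialGraph {W : Type} (G : SimpleGraph W) : Prop :=
  ∀ v, IsSimplicialVtx G v ∨ ∃ u, G.Adj v u ∧ IsSimplicialVtx G u

/-- The cycle graph on `ZMod n`. -/
def cycGraph (n : ℕ) : SimpleGraph (ZMod n) := SimpleGraph.fromRel (fun i j => j = i + 1)

/-- `G` is chordal: it has no induced cycles of length `≥ 4`. -/
def Chordal {W : Type} (G : SimpleGraph W) : Prop :=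
  ∀ n : ℕ, 4 ≤ n → ∀ A : Set W, IsEmpty (G.induce A ≃g cycGraph n)

/-- `G` has a cycle of length `k`. -/
def HasCycleLen {W : Type} (G : SimpleGraph W) (k : ℕ) : Prop :=
  ∃ (a : W) (p : G.Walk a a), p.IsCycle ∧ p.length = k

/-- `z 0, z 1, z 2, z 3, z 4` is an induced 5-cycle of `G`. -/
def IsInduced5Cycle {W : Type} (G : SimpleGraph W) (z : Fin 5 → W) : Prop :=
  Function.Injective z ∧ ∀ i j : Fin 5, G.Adj (z i) (z j) ↔ (j = i + 1 ∨ i = j + 1)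

/-- A basic 5-cycle: an induced 5-cycle without two adjacent vertices of degree `≥ 3`. -/
def IsBasic5Cycle {W : Type} (G : SimpleGraph W) (z : Fin 5 → W) : Prop :=
  IsInduced5Cycle G z ∧ ∀ i : Fin 5, ¬ (3 ≤ gdeg G (z i) ∧ 3 ≤ gdeg G (z (i + 1)))

/-- The set `C_G` of (vertex sets of) basic 5-cycles of `G`. -/
def Basic5Sets {W : Type} (G : SimpleGraph W) : Set (Set W) :=
  {A | ∃ z : Fin 5 → W, IsBasic5Cycle G z ∧ A = Set.range z}

/-- The clique number `ω(G)`. -/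
noncomputable def cliqueNum' {W : Type} (G : SimpleGraph W) : ℕ :=
  sSup {n | ∃ s : Set W, G.IsClique s ∧ s.ncard = n}

/-- `G` is a perfect graph. -/
def IsPerfectGraph {W : Type} (G : SimpleGraph W) : Prop :=
  ∀ A : Set W, (G.induce A).chromaticNumber = (cliqueNum' (G.induce A) : ℕ∞)

/-- A `τ`-reduction of `G` into the induced subgraphs on the `A i`. -/
noncomputable def TauReduction {W : Type} (G : SimpleGraph W) (s : ℕ) (A : Fin s → Set W) : Prop :=
  (∀ i j, i ≠ j → Disjoint (A i) (A j)) ∧ (⋃ i, A i) = Set.univ ∧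
  tau G = ∑ i, tau (G.induce (A i))

/-- `G` is an SCQ graph witnessed by the matching `Q`. -/
def IsSCQ {V : Type} (D : WOGraph V) (Q : Set (Set V)) : Prop :=
  (Q = ∅ ∨ (IsMatchingSet D.graph Q ∧ ∀ e ∈ Q, PropP D.graph e)) ∧
  (∀ A ∈ SimplexSets D.graph ∪ Basic5Sets D.graph ∪ Q,
    ∀ B ∈ SimplexSets D.graph ∪ Basic5Sets D.graph ∪ Q, A = B ∨ Disjoint A B) ∧
  ⋃₀ (SimplexSets D.graph ∪ Basic5Sets D.graph ∪ Q) = Set.univ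

/-- An ideal is unmixed if all its associated primes have the same height. -/
def IsUnmixed {R : Type} [CommRing R] (I : Ideal R) : Prop :=
  ∀ p q : Ideal R, p ∈ associatedPrimes R (R ⧸ I) → q ∈ associatedPrimes R (R ⧸ I) →
    ∀ (hp : p.IsPrime) (hq : q.IsPrime),
      Order.height (⟨p, hp⟩ : PrimeSpectrum R) = Order.height (⟨q, hq⟩ : PrimeSpectrum R)
/-! ## Concrete graphs -/

/-- The 7-cycle `C₇`. -/
def C7graph : SimpleGraph (ZMod 7) := cycGraph 7

/-- Vertices of `T₁₀`. -/
inductive T10V | v | a1 | a2 | a3 | b1 | b2 | b3 | c1 | c2 | c3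
deriving DecidableEq

instance instFintypeT10V : Fintype T10V :=
  ⟨{T10V.v, T10V.a1, T10V.a2, T10V.a3, T10V.b1, T10V.b2, T10V.b3, T10V.c1, T10V.c2, T10V.c3}, fun x => by cases x <;> decide⟩

open T10V in
/-- The graph `T₁₀`. -/
def T10graph : SimpleGraph T10V := SimpleGraph.fromRel (fun x y =>
  (x, y) ∈ ([(v,a1), (v,a2), (v,a3), (a1,b1), (a2,b2), (a3,b3), (b1,c1), (b2,c2),
    (b3,c3), (c1,c2), (c2,c3), (c3,c1)] : List (T10V × T10V)))

/-- Vertices of `Q₁₃`. -/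
inductive Q13V | a1 | a2 | b1 | b2 | c1 | c2 | d1 | d2 | g1 | g2 | h | h' | v
deriving DecidableEq

instance instFintypeQ13V : Fintype Q13V :=
  ⟨{Q13V.a1, Q13V.a2, Q13V.b1, Q13V.b2, Q13V.c1, Q13V.c2, Q13V.d1, Q13V.d2, Q13V.g1, Q13V.g2, Q13V.h, Q13V.h', Q13V.v}, fun x => by cases x <;> decide⟩

open Q13V in
/-- The graph `Q₁₃`. -/
def Q13graph : SimpleGraph Q13V := SimpleGraph.fromRel (fun x y =>
  (x, y) ∈ ([(a1,a2), (a1,d1), (a2,d2), (d1,c1), (d1,g1), (d1,h), (d2,c2), (d2,g2),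
    (d2,h), (g1,b1), (g1,h'), (g2,b2), (g2,h'), (b1,c2), (b2,c1), (h,v),
    (h',v)] : List (Q13V × Q13V)))

/-- Vertices of `P₁₃`. -/
inductive P13V | a1 | a2 | a3 | a4 | b1 | b2 | b3 | b4 | c1 | c2 | d1 | d2 | v
deriving DecidableEq

instance instFintypeP13V : Fintype P13V :=
  ⟨{P13V.a1, P13V.a2, P13V.a3, P13V.a4, P13V.b1, P13V.b2, P13V.b3, P13V.b4, P13V.c1, P13V.c2, P13V.d1, P13V.d2, P13V.v}, fun x => by cases x <;> decide⟩

open P13V in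
/-- The graph `P₁₃`. -/
def P13graph : SimpleGraph P13V := SimpleGraph.fromRel (fun x y =>
  (x, y) ∈ ([(a1,a2), (a1,b1), (a2,b2), (a3,a4), (a3,b3), (a4,b4), (b1,c1), (b2,c1),
    (b3,c2), (b4,c2), (c1,c2), (d1,b1), (d1,b3), (d2,b2), (d2,b4), (v,d1),
    (v,d2)] : List (P13V × P13V)))

/-- Vertices of `P₁₄`. -/
inductive P14V | a1 | a2 | a3 | a4 | a5 | a6 | a7 | b1 | b2 | b3 | b4 | b5 | b6 | b7
deriving DecidableEq

instance instFintypeP14V : Fintype P14V :=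
  ⟨{P14V.a1, P14V.a2, P14V.a3, P14V.a4, P14V.a5, P14V.a6, P14V.a7, P14V.b1, P14V.b2, P14V.b3, P14V.b4, P14V.b5, P14V.b6, P14V.b7}, fun x => by cases x <;> decide⟩

open P14V in
/-- The graph `P₁₄`. -/
def P14graph : SimpleGraph P14V := SimpleGraph.fromRel (fun x y =>
  (x, y) ∈ ([(a1,a2), (a2,a3), (a3,a4), (a4,a5), (a5,a6), (a6,a7), (a7,a1),
    (a1,b1), (a2,b2), (a3,b3), (a4,b4), (a5,b5), (a6,b6), (a7,b7),
    (b1,b3), (b2,b4), (b3,b5), (b4,b6), (b5,b7), (b6,b1), (b7,b2)] : List (P14V × P14V)))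

/-- Vertices of `P₁₀`. -/
inductive P10V | a1 | a2 | b1 | b2 | c1 | c2 | d1 | d2 | g1 | g2
deriving DecidableEq

instance instFintypeP10V : Fintype P10V :=
  ⟨{P10V.a1, P10V.a2, P10V.b1, P10V.b2, P10V.c1, P10V.c2, P10V.d1, P10V.d2, P10V.g1, P10V.g2}, fun x => by cases x <;> decide⟩

open P10V in
/-- The graph `P₁₀`. -/
def P10graph : SimpleGraph P10V := SimpleGraph.fromRel (fun x y =>
  (x, y) ∈ ([(a1,b1), (b1,d2), (d2,d1), (d1,b2), (b2,a2), (a1,g1), (g1,d1), (g1,c1),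
    (c1,c2), (c2,g2), (g2,a2), (d2,g2)] : List (P10V × P10V)))

/-! ## Auxiliary machinery for the proof -/

namespace StarAux

open Classical

variable {V : Type}

/-- Chains of length `n` for a relation. -/
def ReachN (E0 : V → V → Prop) : ℕ → V → V → Prop
  | 0 => fun x y => x = y
  | (n+1) => fun x y => ∃ z, ReachN E0 n x z ∧ E0 z y

theorem reachN_of_rtg {E0 : V → V → Prop} {x y : V} (h : Relation.ReflTransGen E0 x y) :
    ∃ n, ReachN E0 n x y := by
  induction h with
  | refl => exact ⟨0, rfl⟩
  | tail _ he ih => obtain ⟨n, hn⟩ := ih; exact ⟨n+1, _, hn, he⟩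

theorem rtg_of_reachN {E0 : V → V → Prop} {n : ℕ} {x y : V} (h : ReachN E0 n x y) :
    Relation.ReflTransGen E0 x y := by
  induction n generalizing y with
  | zero => cases h; exact .refl
  | succ n ih => obtain ⟨z, hz, he⟩ := h; exact .tail (ih hz) he

theorem ReachN.concat {E0 : V → V → Prop} {m n : ℕ} {x y z : V}
    (h1 : ReachN E0 m x y) (h2 : ReachN E0 n y z) : ReachN E0 (m + n) x z := by
  induction n generalizing z with
  | zero => cases h2; exact h1
  | succ n ih => obtain ⟨w, hw, he⟩ := h2; exact ⟨w, ih hw, he⟩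

theorem ReachN.split {E0 : V → V → Prop} {m n : ℕ} {x z : V}
    (h : ReachN E0 (m + n) x z) : ∃ y, ReachN E0 m x y ∧ ReachN E0 n y z := by
  induction n generalizing z with
  | zero => exact ⟨z, h, rfl⟩
  | succ n ih =>
    obtain ⟨w, hw, he⟩ := h
    obtain ⟨y, hy1, hy2⟩ := ih hw
    exact ⟨y, hy1, w, hy2, he⟩

section Uniq

variable {E0 : V → V → Prop} (huniq : ∀ u u' x : V, E0 u x → E0 u' x → u = u')

include huniq in
theorem reachN_anc_unique : ∀ {n : ℕ} {y y' x : V}, ReachN E0 n y x → ReachN E0 n y' x → y = y' := by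
  intro n
  induction n with
  | zero => intro y y' x h h'; cases h; cases h'; rfl
  | succ n ih =>
    rintro y y' x ⟨z, hz, he⟩ ⟨z', hz', he'⟩
    cases huniq _ _ _ he he'
    exact ih hz hz'

include huniq in
theorem reachN_diff {n n' : ℕ} {y y' x : V} (h : ReachN E0 n y x) (h' : ReachN E0 n' y' x)
    (hle : n ≤ n') : ReachN E0 (n' - n) y' y := by
  obtain ⟨k, rfl⟩ := Nat.exists_eq_add_of_le hle
  rw [Nat.add_sub_cancel_left]
  rw [Nat.add_comm] at h'
  obtain ⟨w, hw1, hw2⟩ := ReachN.split h'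
  cases reachN_anc_unique huniq h hw2
  exact hw1

end Uniq

end StarAux

namespace StarAux

open SimpleGraph

theorem cycle_two_nbrs {V : Type} {G : SimpleGraph V} {a v : V} {p : G.Walk a a}
    (hp : p.IsCycle) (hv : v ∈ p.support) :
    ∃ b c, b ≠ c ∧ G.Adj v b ∧ G.Adj v c ∧ b ∈ p.support ∧ c ∈ p.support := by
  haveI := Classical.decEq V
  have hmem : ∀ x, x ∈ (p.rotate v hv).support → x ∈ p.support := by
    intro x hx
    rcases (SimpleGraph.Walk.mem_support_iff _).mp hx with rfl | hx'
    · exact hv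
    · have := (SimpleGraph.Walk.support_rotate p v hv).mem_iff.mp hx'
      exact (SimpleGraph.Walk.mem_support_iff _).mpr (Or.inr this)
  have hq : (p.rotate v hv).IsCycle := hp.rotate hv
  set q := p.rotate v hv with hqdef
  clear_value q
  cases q with
  | nil => exact absurd hq SimpleGraph.Walk.IsCycle.not_of_nil
  | cons hadj r =>
    rename_i b
    have hnodup : (SimpleGraph.Walk.cons hadj r).edges.Nodup := hq.edges_nodup
    rw [SimpleGraph.Walk.edges_cons] at hnodup
    have hfst : s(v, b) ∉ r.edges := (List.nodup_cons.mp hnodup).1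
    -- get the last edge, as first edge of r.reverse
    have hvb : v ≠ b := by
      intro h; subst h; exact G.irrefl hadj
    have hbv : b ≠ v := by
      exact fun h => hvb h.symm
    obtain ⟨c, hadj', r', hr'⟩ := SimpleGraph.Walk.exists_eq_cons_of_ne hvb r.reverse
    have hcv : G.Adj v c := hadj'
    have hce : s(v, c) ∈ r.edges := by
      have : s(v, c) ∈ r.reverse.edges := by rw [hr']; simp
      rwa [SimpleGraph.Walk.edges_reverse, List.mem_reverse] at this
    have hbc : b ≠ c := by
      rintro rfl
      exact hfst hce
    refine ⟨b, c, hbc, hadj, hcv, ?_, ?_⟩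
    · exact hmem b (by simp)
    · apply hmem
      have : c ∈ r.support := by
        have : c ∈ r.reverse.support := by rw [hr']; simp
        rwa [SimpleGraph.Walk.support_reverse, List.mem_reverse] at this
      simp [this]

theorem cyc_support_subset {V : Type} {G : SimpleGraph V} {E0 : V → V → Prop} {Z : Set V}
    {ρ : V → ℕ}
    (hGE : ∀ x y : V, G.Adj x y → E0 x y ∨ E0 y x)
    (huniq : ∀ u u' x : V, E0 u x → E0 u' x → u = u')
    (hρ : ∀ u x : V, E0 u x → x ∉ Z → ρ u < ρ x)
    (hZ : ∀ u x : V, E0 u x → x ∈ Z → u ∈ Z)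
    {a : V} (p : G.Walk a a) (hp : p.IsCycle) :
    ∀ x ∈ p.support, x ∈ Z := by
  by_contra hcon
  push_neg at hcon
  obtain ⟨x0, hx0s, hx0z⟩ := hcon
  set S : Set V := {x | x ∈ p.support ∧ x ∉ Z} with hS
  have hfin : S.Finite := (List.finite_toSet p.support).subset (fun x hx => hx.1)
  have hne : S.Nonempty := ⟨x0, hx0s, hx0z⟩
  obtain ⟨x, hxS, hxmax⟩ := Set.Finite.exists_maximalFor ρ S hfin hne
  obtain ⟨b, c, hbc, hab, hac, hbs, hcs⟩ := cycle_two_nbrs hp hxS.1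
  have key : ∀ y, G.Adj x y → y ∈ p.support → E0 y x := by
    intro y hadj hys
    obtain h | h := hGE x y hadj
    · -- E0 x y : forward edge
      exfalso
      have hyz : y ∉ Z := fun hy => hxS.2 (hZ x y h hy)
      have : ρ x < ρ y := hρ x y h hyz
      have := hxmax (j := y) ⟨hys, hyz⟩ (le_of_lt this)
      omega
    · exact h
  have hb := key b hab hbs
  have hc := key c hac hcs
  exact hbc (huniq b c x hb hc)

end StarAux

namespace StarAux

open WOGraph

set_option linter.unusedSectionVars false

variable {V : Type} [Fintype V]

theorem exists_max_stable (D : WOGraph V) (M W1 : Set V) (hW1M : W1 ⊆ M)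
    (hW1s : ∀ x ∈ W1, ∀ y ∈ W1, ¬ D.graph.Adj x y) :
    ∃ S : Set V, W1 ⊆ S ∧ S ⊆ M ∧ (∀ x ∈ S, ∀ y ∈ S, ¬ D.graph.Adj x y) ∧
      ∀ x ∈ M, x ∉ S → ∃ s ∈ S, D.graph.Adj x s := by
  set 𝒮 : Set (Set V) := {S | W1 ⊆ S ∧ S ⊆ M ∧ ∀ x ∈ S, ∀ y ∈ S, ¬ D.graph.Adj x y} with h𝒮
  have hfin : 𝒮.Finite := Set.toFinite _
  have hne : 𝒮.Nonempty := ⟨W1, subset_rfl, hW1M, hW1s⟩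
  obtain ⟨S, hS, hmax⟩ := Set.Finite.exists_maximalFor Set.ncard 𝒮 hfin hne
  refine ⟨S, hS.1, hS.2.1, hS.2.2, ?_⟩
  intro x hxM hxS
  by_contra hcon
  push_neg at hcon
  have hstable : ∀ a ∈ insert x S, ∀ b ∈ insert x S, ¬ D.graph.Adj a b := by
    intro a ha b hb
    rcases Set.mem_insert_iff.mp ha with ha' | ha'
    · subst ha'
      rcases Set.mem_insert_iff.mp hb with hb' | hb'
      · subst hb'; exact fun h => D.graph.irrefl h
      · exact hcon b hb'
    · rcases Set.mem_insert_iff.mp hb with hb' | hb'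
      · subst hb'; exact fun h => hcon a ha' h.symm
      · exact hS.2.2 a ha' b hb'
  have hmem : insert x S ∈ 𝒮 :=
    ⟨hS.1.trans (Set.subset_insert _ _), Set.insert_subset hxM hS.2.1, hstable⟩
  have hcard : S.ncard < (insert x S).ncard := by
    rw [Set.ncard_insert_of_notMem hxS (Set.toFinite S)]
    omega
  have := hmax (j := _) hmem (le_of_lt hcard)
  omega

variable {D : WOGraph V} {H : D.OSub} (F : D.SSF H)

theorem nbr_eq_T (i : Fin F.r) {x : V} (hx : x ∈ (F.T i).verts) :
    H.nbr x = (F.T i).nbr x := by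
  ext z
  constructor
  · intro hz
    have hz' : H.E x z ∨ H.E z x := hz
    have key : ∀ u v : V, H.E u v → (u = x ∨ v = x) → (F.T i).E u v := by
      intro u v huv hux
      rcases (F.hE u v).mp huv with ⟨i', hi'⟩ | ⟨j, hj⟩
      · by_cases hii : i' = i
        · subst hii; exact hi'
        · exfalso
          have hxv : x ∈ (F.T i').verts := by
            rcases hux with rfl | rfl
            · exact (F.T i').memL _ _ hi'
            · exact (F.T i').memR _ _ hi'
          exact (F.hTT i' i hii).ne_of_mem hxv hx rfl
      · exfalso
        have hxv : x ∈ (F.B j).verts := by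
          rcases hux with rfl | rfl
          · exact (F.B j).memL _ _ hj
          · exact (F.B j).memR _ _ hj
        exact (F.hTB i j).ne_of_mem hx hxv rfl
    rcases hz' with h | h
    · exact Or.inl (key x z h (Or.inl rfl))
    · exact Or.inr (key z x h (Or.inr rfl))
  · intro hz
    rcases hz with h | h
    · exact Or.inl ((F.hE x z).mpr (Or.inl ⟨i, h⟩))
    · exact Or.inr ((F.hE z x).mpr (Or.inl ⟨i, h⟩))

theorem nbr_eq_B (j : Fin F.s) {x : V} (hx : x ∈ (F.B j).verts) :
    H.nbr x = (F.B j).nbr x := by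
  ext z
  constructor
  · intro hz
    have hz' : H.E x z ∨ H.E z x := hz
    have key : ∀ u v : V, H.E u v → (u = x ∨ v = x) → (F.B j).E u v := by
      intro u v huv hux
      rcases (F.hE u v).mp huv with ⟨i', hi'⟩ | ⟨j', hj'⟩
      · exfalso
        have hxv : x ∈ (F.T i').verts := by
          rcases hux with rfl | rfl
          · exact (F.T i').memL _ _ hi'
          · exact (F.T i').memR _ _ hi'
        exact (F.hTB i' j).ne_of_mem hxv hx rfl
      · by_cases hjj : j' = j
        · subst hjj; exact hj'
        · exfalso
          have hxv : x ∈ (F.B j').verts := by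
            rcases hux with rfl | rfl
            · exact (F.B j').memL _ _ hj'
            · exact (F.B j').memR _ _ hj'
          exact (F.hBB j' j hjj).ne_of_mem hxv hx rfl
    rcases hz' with h | h
    · exact Or.inl (key x z h (Or.inl rfl))
    · exact Or.inr (key z x h (Or.inr rfl))
  · intro hz
    rcases hz with h | h
    · exact Or.inl ((F.hE x z).mpr (Or.inr ⟨j, h⟩))
    · exact Or.inr ((F.hE z x).mpr (Or.inr ⟨j, h⟩))

theorem singleton_nbr_empty {T : D.OSub} {v : V} (hv : T.verts = {v}) (x : V) :
    T.nbr x = ∅ := by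
  ext z
  simp only [OSub.nbr, Set.mem_setOf_eq, Set.mem_empty_iff_false, iff_false]
  rintro (h | h)
  · have h1 := T.memL _ _ h; have h2 := T.memR _ _ h
    rw [hv] at h1 h2
    cases h1; cases h2
    exact D.irrefl _ (T.sub _ _ h)
  · have h1 := T.memL _ _ h; have h2 := T.memR _ _ h
    rw [hv] at h1 h2
    cases h1; cases h2
    exact D.irrefl _ (T.sub _ _ h)

theorem rot_weight {T : D.OSub} {v : V} (hT : D.IsROT T v) {x : V} (hx : x ∈ T.verts)
    (hor : 2 ≤ T.deg x ∨ (x = v ∧ T.deg x = 1)) : 1 < D.w x := by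
  by_contra hcon
  push_neg at hcon
  have hw1 : D.w x = 1 := le_antisymm hcon (D.w_pos x)
  rcases hT.2.2.2 x hx hw1 with ⟨hd, hne⟩ | ⟨hsing, rfl⟩
  · rcases hor with h2 | ⟨rfl, _⟩
    · omega
    · exact hne rfl
  · have : T.nbr x = ∅ := singleton_nbr_empty hsing x
    have hdeg : T.deg x = 0 := by
      unfold OSub.deg
      rw [this, Set.ncard_empty]
    omega

theorem uni_weight {B : D.OSub} {Cs : Set V} (hB : D.IsUnicycle B Cs) {x : V}
    (hx : x ∈ B.verts) (h2 : 2 ≤ B.deg x) : 1 < D.w x := by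
  by_contra hcon
  push_neg at hcon
  have hw1 : D.w x = 1 := le_antisymm hcon (D.w_pos x)
  have := hB.2.2.2 x hx hw1
  omega

theorem tilde_weight : ∀ a ∈ F.tilde, 1 < D.w a := by
  intro a ha
  rcases ha with ⟨haH, hdeg⟩ | ⟨⟨i, rfl⟩, hdeg⟩
  · rw [F.hverts] at haH
    rcases haH with haT | haB
    · simp only [Set.mem_iUnion] at haT
      obtain ⟨i, hi⟩ := haT
      have hde : H.deg a = (F.T i).deg a := by
        unfold OSub.deg; rw [nbr_eq_T F i hi]
      exact rot_weight (F.hT i) hi (Or.inl (hde ▸ hdeg))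
    · simp only [Set.mem_iUnion] at haB
      obtain ⟨j, hj⟩ := haB
      have hde : H.deg a = (F.B j).deg a := by
        unfold OSub.deg; rw [nbr_eq_B F j hj]
      exact uni_weight (F.hB j) hj (hde ▸ hdeg)
  · have hv : F.parent i ∈ (F.T i).verts := (F.hT i).1
    have hde : H.deg (F.parent i) = (F.T i).deg (F.parent i) := by
      unfold OSub.deg; rw [nbr_eq_T F i hv]
    exact rot_weight (F.hT i) hv (Or.inr ⟨rfl, hde ▸ hdeg⟩)

theorem tree_witness (i : Fin F.r) {x : V} (hx : x ∈ (F.T i).verts)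
    (hxv : x ≠ F.parent i) :
    ∃ y, (F.T i).E y x ∧ 1 < D.w y ∧ y ∈ F.tilde := by
  have hreach := (F.hT i).2.2.1 x hx
  rcases hreach.cases_tail with heq | ⟨y, _, hyx⟩
  · exact absurd heq hxv
  have hyV : y ∈ (F.T i).verts := (F.T i).memL _ _ hyx
  have hxy : x ∈ (F.T i).nbr y := Or.inl hyx
  have hd1 : 1 ≤ (F.T i).deg y := by
    have : 0 < ((F.T i).nbr y).ncard := by
      rw [Set.ncard_pos (Set.toFinite _)]
      exact ⟨x, hxy⟩
    exact this
  have hdeH : H.deg y = (F.T i).deg y := by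
    unfold OSub.deg; rw [nbr_eq_T F i hyV]
  have hyH : y ∈ H.verts := by
    rw [F.hverts]; exact Or.inl (Set.mem_iUnion.mpr ⟨i, hyV⟩)
  by_cases hyv : y = F.parent i
  · have hor : 2 ≤ (F.T i).deg y ∨ (y = F.parent i ∧ (F.T i).deg y = 1) := by
      rcases Nat.lt_or_ge ((F.T i).deg y) 2 with h | h
      · exact Or.inr ⟨hyv, by omega⟩
      · exact Or.inl h
    refine ⟨y, hyx, rot_weight (F.hT i) hyV hor, ?_⟩
    rcases Nat.lt_or_ge ((F.T i).deg y) 2 with h | h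
    · exact Or.inr ⟨⟨i, hyv.symm⟩, by omega⟩
    · exact Or.inl ⟨hyH, by omega⟩
  · -- y is not the root: it has its own in-edge
    have hreachy := (F.hT i).2.2.1 y hyV
    rcases hreachy.cases_tail with heq | ⟨z, _, hzy⟩
    · exact absurd heq hyv
    have hzx : z ≠ x := by
      rintro rfl
      exact D.asymm _ _ ((F.T i).sub _ _ hzy) ((F.T i).sub _ _ hyx)
    have h2 : 2 ≤ (F.T i).deg y := by
      have : 1 < ((F.T i).nbr y).ncard := by
        rw [Set.one_lt_ncard (Set.toFinite _)]
        exact ⟨x, hxy, z, Or.inr hzy, fun h => hzx h.symm⟩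
      exact this
    exact ⟨y, hyx, rot_weight (F.hT i) hyV (Or.inl h2), Or.inl ⟨hyH, hdeH ▸ h2⟩⟩

theorem two_ne_zero_zmod {n : ℕ} (hn : 3 ≤ n) : (2 : ZMod n) ≠ 0 := by
  haveI : NeZero n := ⟨by omega⟩
  intro h
  have : ((2 : ℕ) : ZMod n) = 0 := by exact_mod_cast h
  rw [ZMod.natCast_eq_zero_iff] at this
  exact absurd (Nat.le_of_dvd (by norm_num) this) (by omega)

theorem cyc_witness (j : Fin F.s) {x : V} (hx : x ∈ (F.B j).verts) :
    ∃ y, (F.B j).E y x ∧ 1 < D.w y ∧ y ∈ F.tilde := by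
  obtain ⟨⟨n, f, hn3, hinj, hrange, hcyc⟩, _hallcyc, hreach, _hw1⟩ := F.hB j
  have htwo := two_ne_zero_zmod (n := n) hn3
  have hwit : ∀ y, (F.B j).E y x → 2 ≤ (F.B j).deg y → ∃ y', (F.B j).E y' x ∧
      1 < D.w y' ∧ y' ∈ F.tilde := by
    intro y hyx h2
    have hyV : y ∈ (F.B j).verts := (F.B j).memL _ _ hyx
    have hyH : y ∈ H.verts := by
      rw [F.hverts]; exact Or.inr (Set.mem_iUnion.mpr ⟨j, hyV⟩)
    have hdeH : H.deg y = (F.B j).deg y := by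
      unfold OSub.deg; rw [nbr_eq_B F j hyV]
    exact ⟨y, hyx, uni_weight (F.hB j) hyV h2, Or.inl ⟨hyH, hdeH ▸ h2⟩⟩
  have hcdeg : ∀ k : ZMod n, 2 ≤ (F.B j).deg (f k) := by
    intro k
    have h1 : (F.B j).E (f (k-1)) (f k) := by
      have := hcyc (k-1)
      rwa [sub_add_cancel] at this
    have h2 : (F.B j).E (f k) (f (k+1)) := by exact hcyc k
    have hne : f (k+1) ≠ f (k-1) := by
      intro h
      have := hinj h
      have h2 : (2 : ZMod n) = 0 := by
        have : k + 1 - (k - 1) = 0 := by rw [this]; ring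
        calc (2 : ZMod n) = k + 1 - (k - 1) := by ring
        _ = 0 := this
      exact htwo h2
    have : 1 < ((F.B j).nbr (f k)).ncard := by
      rw [Set.one_lt_ncard (Set.toFinite _)]
      exact ⟨f (k+1), Or.inl h2, f (k-1), Or.inr h1, hne⟩
    exact this
  by_cases hxC : x ∈ F.Cs j
  · rw [← hrange] at hxC
    obtain ⟨i, rfl⟩ := hxC
    have h1 : (F.B j).E (f (i-1)) (f i) := by
      have := hcyc (i-1)
      rwa [sub_add_cancel] at this
    exact hwit _ h1 (hcdeg (i-1))
  · obtain ⟨z, hzC, hz⟩ := hreach x hx hxC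
    rcases hz.cases_tail with heq | ⟨y, _, hyx⟩
    · exact absurd (heq ▸ hzC) hxC
    by_cases hyC : y ∈ F.Cs j
    · rw [← hrange] at hyC
      obtain ⟨k, rfl⟩ := hyC
      exact hwit _ hyx (hcdeg k)
    · have hyV : y ∈ (F.B j).verts := (F.B j).memL _ _ hyx
      obtain ⟨z', hz'C, hz'⟩ := hreach y hyV hyC
      rcases hz'.cases_tail with heq | ⟨u, _, huy⟩
      · exact absurd (heq ▸ hz'C) hyC
      have hux : u ≠ x := by
        rintro rfl
        exact D.asymm _ _ ((F.B j).sub _ _ huy) ((F.B j).sub _ _ hyx)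
      have h2 : 2 ≤ (F.B j).deg y := by
        have : 1 < ((F.B j).nbr y).ncard := by
          rw [Set.one_lt_ncard (Set.toFinite _)]
          exact ⟨x, Or.inl hyx, u, Or.inr huy, fun h => hux h.symm⟩
        exact this
      exact hwit _ hyx h2

end StarAux

namespace StarAux

open WOGraph

set_option linter.unusedSectionVars false

variable {V : Type} [Fintype V]

theorem ssf_to_svc (D : WOGraph V) (K : D.OSub) (h : D.HasGenSSF K) :
    ∃ C : Set V, D.IsStrongVC C ∧ K.verts ⊆ C := by
  obtain ⟨H, ⟨F⟩, hHK⟩ := h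
  have hW1out : D.outNS (F.W2 ∪ F.tilde) ∩ F.W1 = ∅ := F.hW1_out
  set M : Set V := {x | x ∉ H.verts ∧ x ∉ D.outNS (F.W2 ∪ F.tilde)} with hM
  have hW1M : F.W1 ⊆ M := by
    intro x hx
    have hxr : x ∈ Set.range F.wv := by
      rw [← F.hW_union]; exact Or.inl hx
    obtain ⟨i, rfl⟩ := hxr
    constructor
    · exact F.hwv_not i
    · intro hout
      have : F.wv i ∈ D.outNS (F.W2 ∪ F.tilde) ∩ F.W1 := ⟨hout, hx⟩
      rw [hW1out] at this
      exact this
  obtain ⟨S, hW1S, hSM, hSst, hSmax⟩ := exists_max_stable D M F.W1 hW1M F.hW1_stable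
  set C : Set V := {z | z ∉ S} with hC
  have hHC : H.verts ⊆ C := by
    intro x hx hxS
    exact (hSM hxS).1 hx
  have hVC : D.IsVC C := by
    intro u v huv
    by_contra hcon
    push_neg at hcon
    have hu : u ∈ S := not_not.mp hcon.1
    have hv : v ∈ S := not_not.mp hcon.2
    have hne : u ≠ v := fun h => D.irrefl u (h ▸ huv)
    exact hSst u hu v hv ((SimpleGraph.fromRel_adj _ _ _).mpr ⟨hne, Or.inl huv⟩)
  -- no out-neighbour of W2 ∪ tilde escapes C
  have hnotout : ∀ y ∈ F.W2 ∪ F.tilde, ∀ z, D.E y z → z ∈ C := by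
    intro y hy z hyz hzS
    exact (hSM hzS).2 ⟨y, hy, hyz⟩
  have hnL1 : ∀ y ∈ F.W2 ∪ F.tilde, y ∉ D.L1 C := by
    rintro y hy ⟨_, z, hyz, hzC⟩
    exact hzC (hnotout y hy z hyz)
  -- helper : an L3 vertex has no neighbour outside C
  have hL3nbr : ∀ x, x ∈ D.L3 C → ∀ s, s ∉ C → ¬ (D.E x s ∨ D.E s x) := by
    rintro x ⟨hxC, hxL1, hxL2⟩ s hsC (h | h)
    · exact hxL1 ⟨hxC, s, h, hsC⟩
    · exact hxL2 ⟨hxC, hxL1, s, h, hsC⟩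
  refine ⟨C, ⟨hVC, ?_⟩, hHK ▸ hHC⟩
  intro x hx
  have hxC : x ∈ C := hx.1
  by_cases hxH : x ∈ H.verts
  · rw [F.hverts] at hxH
    rcases hxH with hxT | hxB
    · obtain ⟨i, hxi⟩ := Set.mem_iUnion.mp hxT
      by_cases hxv : x = F.parent i
      · -- x is the root of the tree T i; use its w-vertex
        have hwv : F.wv i ∈ F.W1 ∪ F.W2 := by
          rw [F.hW_union]; exact ⟨i, rfl⟩
        have hnbr : D.E (F.parent i) (F.wv i) ∨ D.E (F.wv i) (F.parent i) := F.hwv_nbr i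
        rcases hwv with hw1 | hw2
        · exfalso
          have hwS : F.wv i ∈ S := hW1S hw1
          have hwC : F.wv i ∉ C := fun hc => hc hwS
          rcases hnbr with h | h
          · exact hL3nbr x hx _ hwC (Or.inl (hxv ▸ h))
          · exact hL3nbr x hx _ hwC (Or.inr (hxv ▸ h))
        · have hedge : D.E (F.wv i) x := hxv ▸ F.hW2_edge i hw2
          by_cases hwS : F.wv i ∈ S
          · exact absurd (Or.inr hedge) (hL3nbr x hx _ (fun hc => hc hwS))
          · exact ⟨F.wv i, hedge, hwS, hnL1 _ (Or.inl hw2), F.hW2_plus hw2⟩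
      · obtain ⟨y, hyx, hwy, hytl⟩ := tree_witness F i hxi hxv
        have hyH : y ∈ H.verts := by
          rw [F.hverts]
          exact Or.inl (Set.mem_iUnion.mpr ⟨i, (F.T i).memL _ _ hyx⟩)
        exact ⟨y, (F.T i).sub _ _ hyx, hHC hyH, hnL1 _ (Or.inr hytl), hwy⟩
    · obtain ⟨j, hxj⟩ := Set.mem_iUnion.mp hxB
      obtain ⟨y, hyx, hwy, hytl⟩ := cyc_witness F j hxj
      have hyH : y ∈ H.verts := by
        rw [F.hverts]
        exact Or.inr (Set.mem_iUnion.mpr ⟨j, (F.B j).memL _ _ hyx⟩)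
      exact ⟨y, (F.B j).sub _ _ hyx, hHC hyH, hnL1 _ (Or.inr hytl), hwy⟩
  · by_cases hxo : x ∈ D.outNS (F.W2 ∪ F.tilde)
    · obtain ⟨a, ha, hax⟩ := hxo
      by_cases haS : a ∈ S
      · exact absurd (Or.inr hax) (hL3nbr x hx _ (fun hc => hc haS))
      · have hwa : 1 < D.w a := by
          rcases ha with ha2 | hatl
          · exact F.hW2_plus ha2
          · exact tilde_weight F a hatl
        exact ⟨a, hax, haS, hnL1 _ ha, hwa⟩
    · have hxM : x ∈ M := ⟨hxH, hxo⟩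
      have hxS : x ∉ S := hxC
      obtain ⟨s, hsS, hadj⟩ := hSmax x hxM hxS
      rw [WOGraph.graph, SimpleGraph.fromRel_adj] at hadj
      exact absurd hadj.2 (hL3nbr x hx s (fun hc => hc hsS))

end StarAux

namespace StarAux

variable {V : Type} {E0 : V → V → Prop}

/-- Periodic point of the relation. -/
def Per (E0 : V → V → Prop) (x : V) : Prop := ∃ k, 0 < k ∧ ReachN E0 k x x

/-- Bi-reachability. -/
def Rel (E0 : V → V → Prop) (x y : V) : Prop :=
  Relation.ReflTransGen E0 x y ∧ Relation.ReflTransGen E0 y x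

theorem rel_refl (x : V) : Rel E0 x x := ⟨.refl, .refl⟩

theorem rel_symm {x y : V} (h : Rel E0 x y) : Rel E0 y x := ⟨h.2, h.1⟩

theorem rel_trans {x y z : V} (h : Rel E0 x y) (h' : Rel E0 y z) : Rel E0 x z :=
  ⟨h.1.trans h'.1, h'.2.trans h.2⟩

theorem per_of_rel {p q : V} (hp : Per E0 p) (h : Rel E0 p q) : Per E0 q := by
  obtain ⟨hpq, hqp⟩ := h
  obtain ⟨a, ha⟩ := reachN_of_rtg hpq
  obtain ⟨b, hb⟩ := reachN_of_rtg hqp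
  rcases Nat.eq_zero_or_pos (b + a) with h0 | hpos
  · have hb0 : b = 0 := by omega
    subst hb0
    cases hb
    exact hp
  · exact ⟨b + a, hpos, hb.concat ha⟩

theorem per_in_edge {p : V} (hp : Per E0 p) : ∃ z, E0 z p ∧ Rel E0 p z := by
  obtain ⟨k, hk, hloop⟩ := hp
  obtain ⟨k', rfl⟩ : ∃ k', k = k' + 1 := ⟨k - 1, by omega⟩
  obtain ⟨z, hz, he⟩ := hloop
  exact ⟨z, he, rtg_of_reachN hz, Relation.ReflTransGen.single he⟩

theorem reachN_iter {k : ℕ} {x : V} (h : ReachN E0 k x x) : ∀ j, ReachN E0 (j * k) x x := by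
  intro j
  induction j with
  | zero => rw [Nat.zero_mul]; exact rfl
  | succ j ih =>
    have : (j + 1) * k = j * k + k := by ring
    rw [this]
    exact ih.concat h

theorem reachN_head {n : ℕ} {x y : V} (h : ReachN E0 (n + 1) x y) :
    ∃ z, E0 x z ∧ ReachN E0 n z y := by
  induction n generalizing y with
  | zero =>
    obtain ⟨z, hz, he⟩ := h
    have hz' : x = z := hz
    subst hz'
    exact ⟨y, he, rfl⟩
  | succ n ih =>
    obtain ⟨w, hw, hwe⟩ := h
    obtain ⟨z, hxz, hzw⟩ := ih hw
    exact ⟨z, hxz, w, hzw, hwe⟩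

section WithUniq

variable (huniq : ∀ u u' x : V, E0 u x → E0 u' x → u = u')

include huniq in
theorem anc_per_orbit {p : V} (hp : Per E0 p) {d : ℕ} {y : V} (h : ReachN E0 d y p) :
    Rel E0 p y := by
  obtain ⟨k, hk, hloop⟩ := hp
  have hiter := reachN_iter hloop d
  have hdk : d ≤ d * k := Nat.le_mul_of_pos_right d hk
  obtain ⟨c, hc⟩ : ∃ c, d * k = c + d := ⟨d * k - d, by omega⟩
  rw [hc] at hiter
  obtain ⟨z, hz1, hz2⟩ := ReachN.split hiter
  obtain rfl := reachN_anc_unique huniq h hz2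
  exact ⟨rtg_of_reachN hz1, rtg_of_reachN h⟩

include huniq in
theorem root_unique {v v' x : V} {n n' : ℕ} (hv : ∀ u, ¬ E0 u v)
    (h : ReachN E0 n v x) (h' : ReachN E0 n' v' x) (hle : n ≤ n') : v' = v := by
  have hd := reachN_diff huniq h h' hle
  rcases Nat.eq_zero_or_pos (n' - n) with h0 | hpos
  · rw [h0] at hd; exact hd
  · obtain ⟨c, hc⟩ : ∃ c, n' - n = c + 1 := ⟨n' - n - 1, by omega⟩
    rw [hc] at hd
    obtain ⟨z, _, he⟩ := hd
    exact absurd he (hv z)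

include huniq in
theorem orbit_cycle {q : V} (hq : Per E0 q)
    (hirr : ∀ x, ¬ E0 x x) (hasym : ∀ x y, E0 x y → ¬ E0 y x) :
    ∃ (m : ℕ) (f : ZMod m → V), 3 ≤ m ∧ Function.Injective f ∧
      Set.range f = {y | Rel E0 q y} ∧ (∀ i, E0 (f i) (f (i + 1))) := by
  classical
  obtain ⟨m, hm0, hmloop, hmin⟩ :
      ∃ m, 0 < m ∧ ReachN E0 m q q ∧ ∀ k, 0 < k → ReachN E0 k q q → m ≤ k := by
    have hSqne : Set.Nonempty {k | 0 < k ∧ ReachN E0 k q q} := hq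
    obtain ⟨h1, h2⟩ := Nat.sInf_mem hSqne
    exact ⟨_, h1, h2, fun k hk1 hk2 => Nat.sInf_le ⟨hk1, hk2⟩⟩
  -- ancestors of q at every distance
  have hanc_ex : ∀ d, ∃ y, ReachN E0 d y q := by
    intro d
    have hiter := reachN_iter hmloop d
    have hdm : d ≤ d * m := Nat.le_mul_of_pos_right d hm0
    obtain ⟨c, hc⟩ : ∃ c, d * m = c + d := ⟨d * m - d, by omega⟩
    rw [hc] at hiter
    obtain ⟨z, _, hz⟩ := ReachN.split hiter
    exact ⟨z, hz⟩
  obtain ⟨anc, hanc⟩ : ∃ anc : ℕ → V, ∀ d, ReachN E0 d (anc d) q :=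
    ⟨fun d => (hanc_ex d).choose, fun d => (hanc_ex d).choose_spec⟩
  have hanc_eq : ∀ d y, ReachN E0 d y q → y = anc d := fun d y h =>
    reachN_anc_unique huniq h (hanc d)
  have hanc0 : anc 0 = q := (hanc_eq 0 q rfl).symm
  have hancm : anc m = q := (hanc_eq m q hmloop).symm
  have hedge : ∀ d, E0 (anc (d + 1)) (anc d) := by
    intro d
    obtain ⟨z, hz, h2⟩ := reachN_head (hanc (d + 1))
    obtain rfl := hanc_eq d z h2
    exact hz
  have hq_reach_anc : ∀ d, ReachN E0 (d * m - d) q (anc d) := by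
    intro d
    have hiter := reachN_iter hmloop d
    have hdm : d ≤ d * m := Nat.le_mul_of_pos_right d hm0
    obtain ⟨c, hc⟩ : ∃ c, d * m = c + d := ⟨d * m - d, by omega⟩
    rw [hc] at hiter
    obtain ⟨z, hz1, hz2⟩ := ReachN.split hiter
    obtain rfl := hanc_eq d z hz2
    have : c = d * m - d := by omega
    rwa [← this]
  have hanc_add : ∀ d j, anc (d + j * m) = anc d := by
    intro d j
    have : ReachN E0 (d + j * m) (anc d) q := (hanc d).concat (reachN_iter hmloop j)
    exact (hanc_eq _ _ this).symm
  have hloopdvd : ∀ k, ReachN E0 k q q → m ∣ k := by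
    intro k
    induction k using Nat.strong_induction_on with
    | _ k ih =>
      intro hk
      rcases Nat.eq_zero_or_pos k with rfl | hkpos
      · exact dvd_zero m
      · have hmk : m ≤ k := hmin k hkpos hk
        rcases Nat.eq_or_lt_of_le hmk with rfl | hlt
        · exact dvd_rfl
        · obtain ⟨c, hc⟩ : ∃ c, k = c + m := ⟨k - m, by omega⟩
          rw [hc] at hk
          obtain ⟨z, hz1, hz2⟩ := ReachN.split hk
          obtain rfl := hanc_eq m z hz2
          rw [hancm] at hz1
          have hck : c < k := by omega
          have := ih c hck hz1
          rw [hc]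
          exact this.add dvd_rfl
  have hanc_inj : ∀ a b, a < m → b < m → anc a = anc b → a = b := by
    have key : ∀ a b, a < b → b < m → anc a ≠ anc b := by
      intro a b hab hbm heq
      have h1 : ReachN E0 a (anc b) q := heq ▸ hanc a
      have h2 : ReachN E0 b (anc b) q := hanc b
      have hdiff := reachN_diff huniq h1 h2 (by omega)
      -- loop of length b - a at anc b
      have hsplit := hmloop
      obtain ⟨c, hc⟩ : ∃ c, m = c + a := ⟨m - a, by omega⟩
      rw [hc] at hsplit
      obtain ⟨z, hz1, hz2⟩ := ReachN.split hsplit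
      obtain rfl := hanc_eq a z hz2
      rw [heq] at hz1
      -- q →(c) anc b →(b-a) anc b →(a) q  : loop of length c + (b-a) + a = m + (b-a)
      have hbig : ReachN E0 (c + (b - a) + a) q q :=
        (hz1.concat hdiff).concat (heq ▸ hanc a)
      have hdvd := hloopdvd _ hbig
      have : c + (b - a) + a = m + (b - a) := by omega
      rw [this] at hdvd
      have : m ∣ (b - a) := (Nat.dvd_add_right dvd_rfl).mp hdvd
      have := Nat.le_of_dvd (by omega) this
      omega
    intro a b ha hb heq
    rcases Nat.lt_trichotomy a b with h | h | h
    · exact absurd heq (key a b h hb)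
    · exact h
    · exact absurd heq.symm (key b a h ha)
  have hm3 : 3 ≤ m := by
    rcases Nat.lt_or_ge m 3 with h | h
    · exfalso
      interval_cases m
      · obtain ⟨z, hz, he⟩ := hmloop
        have hz' : q = z := hz
        subst hz'
        exact hirr q he
      · obtain ⟨z, hz1, hz2⟩ := ReachN.split (show ReachN E0 (1 + 1) q q from hmloop)
        obtain ⟨w, hw, hwe⟩ := hz1
        have hw2 : q = w := hw
        subst hw2
        obtain ⟨w', hw', hwe'⟩ := hz2
        have hw2' : z = w' := hw'
        subst hw2'
        exact hasym _ _ hwe hwe'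
    · exact h
  haveI : NeZero m := ⟨by omega⟩
  have hmodinj : ∀ a b, a < m → b < m → (m - a) % m = (m - b) % m → a = b := by
    intro a b ha hb h
    rcases Nat.eq_zero_or_pos a with rfl | hapos
    · rcases Nat.eq_zero_or_pos b with rfl | hbpos
      · rfl
      · rw [Nat.sub_zero, Nat.mod_self, Nat.mod_eq_of_lt (by omega)] at h
        omega
    · rcases Nat.eq_zero_or_pos b with rfl | hbpos
      · rw [Nat.sub_zero, Nat.mod_self, Nat.mod_eq_of_lt (by omega)] at h
        omega
      · rw [Nat.mod_eq_of_lt (by omega), Nat.mod_eq_of_lt (by omega)] at h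
        omega
  refine ⟨m, fun i => anc ((m - i.val) % m), hm3, ?_, ?_, ?_⟩
  · intro i j hij
    have hi : i.val < m := ZMod.val_lt i
    have hj : j.val < m := ZMod.val_lt j
    have h1 : (m - i.val) % m < m := Nat.mod_lt _ (by omega)
    have h2 : (m - j.val) % m < m := Nat.mod_lt _ (by omega)
    have := hanc_inj _ _ h1 h2 hij
    have hval : i.val = j.val := hmodinj _ _ hi hj this
    have hi' := ZMod.natCast_rightInverse (n := m) i
    have hj' := ZMod.natCast_rightInverse (n := m) j
    rw [← hi', ← hj', hval]
  · ext y
    simp only [Set.mem_range, Set.mem_setOf_eq]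
    constructor
    · rintro ⟨i, rfl⟩
      exact ⟨rtg_of_reachN (hq_reach_anc ((m - i.val) % m)),
        rtg_of_reachN (hanc ((m - i.val) % m))⟩
    · rintro ⟨h1, h2⟩
      obtain ⟨b, hb⟩ := reachN_of_rtg h2
      obtain rfl := hanc_eq b y hb
      have hb' : anc b = anc (b % m) := by
        conv_lhs => rw [show b = b % m + (b / m) * m by
          rw [Nat.mul_comm]; exact (Nat.mod_add_div b m).symm]
        exact hanc_add _ _
      have hrm : b % m < m := Nat.mod_lt _ (by omega)
      refine ⟨((m - b % m) % m : ℕ), ?_⟩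
      show anc ((m - (((m - b % m) % m : ℕ) : ZMod m).val) % m) = anc b
      rw [hb']
      congr 1
      have hval : (((m - b % m) % m : ℕ) : ZMod m).val = (m - b % m) % m := by
        rw [ZMod.val_natCast]
        exact Nat.mod_eq_of_lt (Nat.mod_lt _ (by omega))
      rw [hval]
      -- (m - (m - b % m) % m) % m = b % m
      rcases Nat.eq_zero_or_pos (b % m) with h0 | hrpos
      · rw [h0, Nat.sub_zero, Nat.mod_self, Nat.sub_zero, Nat.mod_self]
      · rw [Nat.mod_eq_of_lt (show m - b % m < m by omega),
          Nat.sub_sub_self hrm.le, Nat.mod_eq_of_lt hrm]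
  · intro i
    show E0 (anc ((m - i.val) % m)) (anc ((m - (i + 1).val) % m))
    have hi : i.val < m := ZMod.val_lt i
    haveI : Fact (1 < m) := ⟨by omega⟩
    have hval1 : (i + 1).val = (i.val + 1) % m := by
      rw [ZMod.val_add, ZMod.val_one]
    rcases Nat.eq_or_lt_of_le (show i.val + 1 ≤ m by omega) with heq | hlt
    · -- i.val = m - 1
      have h1 : (i + 1).val = 0 := by rw [hval1, heq, Nat.mod_self]
      have h2 : (m - i.val) % m = 1 := by
        rw [show m - i.val = 1 by omega, Nat.mod_eq_of_lt (by omega)]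
      rw [h1, h2]
      simpa using hedge 0
    · have h1 : (i + 1).val = i.val + 1 := by rw [hval1, Nat.mod_eq_of_lt hlt]
      rw [h1]
      rcases Nat.eq_zero_or_pos i.val with h0 | hpos
      · rw [h0]
        have h2 : (m - 0) % m = 0 := by rw [Nat.sub_zero, Nat.mod_self]
        have h3 : (m - (0 + 1)) % m = m - 1 := by
          rw [Nat.mod_eq_of_lt (by omega)]
        rw [h2, h3, hanc0, ← hancm, show m = (m-1) + 1 by omega]
        exact hedge (m - 1)
      · have h2 : (m - i.val) % m = m - i.val := Nat.mod_eq_of_lt (by omega)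
        have h3 : (m - (i.val + 1)) % m = m - i.val - 1 := by
          rw [Nat.mod_eq_of_lt (by omega)]; omega
        rw [h2, h3, show m - i.val = (m - i.val - 1) + 1 by omega]
        exact hedge _

end WithUniq

end StarAux

namespace StarAux

open WOGraph

theorem list_all_eq_length_le_one {V : Type} (l : List V) (w : V) (hnd : l.Nodup)
    (hall : ∀ x ∈ l, x = w) : l.length ≤ 1 := by
  match l with
  | [] => simp
  | [a] => simp
  | a :: b :: t =>
    exfalso
    have ha : a = w := hall a (by simp)
    have hb : b = w := hall b (by simp)
    rw [List.nodup_cons] at hnd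
    exact hnd.1 (by rw [ha, ← hb]; simp)

variable {V : Type} {D : WOGraph V} {Fe : V → V → Prop}

/-- Descendants of a vertex. -/
def Desc (Fe : V → V → Prop) (v : V) : Set V := {x | Relation.ReflTransGen Fe v x}

/-- Descendants of a set. -/
def DescO (Fe : V → V → Prop) (O : Set V) : Set V :=
  {x | ∃ p ∈ O, Relation.ReflTransGen Fe p x}

/-- The tree component rooted at `v`. -/
def TreeSub (D : WOGraph V) (Fe : V → V → Prop) (hFe_sub : ∀ a b, Fe a b → D.E a b)
    (v : V) : D.OSub where
  verts := Desc Fe v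
  E a b := Fe a b ∧ a ∈ Desc Fe v
  sub a b h := hFe_sub a b h.1
  memL _ _ h := h.2
  memR _ _ h := h.2.tail h.1

/-- The unicycle component of an orbit `O`. -/
def CycSub (D : WOGraph V) (Fe : V → V → Prop) (hFe_sub : ∀ a b, Fe a b → D.E a b)
    (O : Set V) : D.OSub where
  verts := DescO Fe O
  E a b := Fe a b ∧ a ∈ DescO Fe O
  sub a b h := hFe_sub a b h.1
  memL _ _ h := h.2
  memR _ _ h := by obtain ⟨p, hp, hr⟩ := h.2; exact ⟨p, hp, hr.tail h.1⟩

variable {hFe_sub : ∀ a b, Fe a b → D.E a b}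

theorem rtg_tree {v x : V} (hx : x ∈ Desc Fe v) :
    Relation.ReflTransGen (TreeSub D Fe hFe_sub v).E v x := by
  induction hx with
  | refl => exact .refl
  | tail hab he ih => exact ih.tail ⟨he, hab⟩

theorem rtg_cyc {O : Set V} {p x : V} (hp : p ∈ O) (h : Relation.ReflTransGen Fe p x) :
    Relation.ReflTransGen (CycSub D Fe hFe_sub O).E p x := by
  induction h with
  | refl => exact .refl
  | tail hab he ih => exact ih.tail ⟨he, p, hp, hab⟩

section Tree

variable (huniq : ∀ u u' x : V, Fe u x → Fe u' x → u = u')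
  (hwit : ∀ a b : V, Fe a b → 1 < D.w a)

include huniq in
theorem tree_acyclic {v : V} (hv : ∀ u, ¬ Fe u v) :
    (TreeSub D Fe hFe_sub v).graph.IsAcyclic := by
  intro a p hp
  have huniqT : ∀ u u' x : V, (TreeSub D Fe hFe_sub v).E u x → (TreeSub D Fe hFe_sub v).E u' x →
      u = u' := by
    rintro u u' x ⟨h1, _⟩ ⟨h2, _⟩; exact huniq _ _ _ h1 h2
  have hGE : ∀ x y : V, (TreeSub D Fe hFe_sub v).graph.Adj x y →
      (TreeSub D Fe hFe_sub v).E x y ∨ (TreeSub D Fe hFe_sub v).E y x := by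
    intro x y hadj
    exact ((SimpleGraph.fromRel_adj _ _ _).mp hadj).2
  have key := cyc_support_subset (Z := ({v} : Set V))
      (ρ := fun x => sInf {n | ReachN (TreeSub D Fe hFe_sub v).E n v x}) hGE huniqT ?_ ?_ p hp
  · have h3 := hp.three_le_length
    have hnd : p.support.tail.Nodup := ((SimpleGraph.Walk.isCycle_def p).mp hp).2.2
    have hall : ∀ x ∈ p.support.tail, x = v := by
      intro x hx
      exact key x (List.mem_of_mem_tail hx)
    have hlen : p.support.length = p.support.tail.length + 1 := by
      conv_lhs => rw [SimpleGraph.Walk.support_eq_cons]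
      simp
    have hlen2 : p.support.length = p.length + 1 := SimpleGraph.Walk.length_support p
    have := list_all_eq_length_le_one p.support.tail v hnd hall
    omega
  · -- rank increases along edges
    intro u x hux hxv
    show sInf {n | ReachN (TreeSub D Fe hFe_sub v).E n v u} <
      sInf {n | ReachN (TreeSub D Fe hFe_sub v).E n v x}
    have hxd : x ∈ Desc Fe v := hux.2.tail hux.1
    have hne : Set.Nonempty {n | ReachN (TreeSub D Fe hFe_sub v).E n v x} :=
      reachN_of_rtg (rtg_tree hxd)
    have hmem := Nat.sInf_mem hne
    rcases Nat.eq_zero_or_pos (sInf {n | ReachN (TreeSub D Fe hFe_sub v).E n v x}) with h0 | hpos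
    · exfalso
      rw [h0] at hmem
      have : v = x := hmem
      exact hxv (by rw [← this]; rfl)
    · obtain ⟨c, hc⟩ : ∃ c, sInf {n | ReachN (TreeSub D Fe hFe_sub v).E n v x} = c + 1 :=
        ⟨sInf {n | ReachN (TreeSub D Fe hFe_sub v).E n v x} - 1, by omega⟩
      rw [hc] at hmem
      obtain ⟨z, hz, he⟩ := hmem
      have hzu : z = u := huniqT z u x he hux
      rw [hzu] at hz
      have : sInf {n | ReachN (TreeSub D Fe hFe_sub v).E n v u} ≤ c := Nat.sInf_le hz
      omega
  · -- {v} closed under in-edges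
    intro u x hux hxv
    have : x = v := hxv
    subst this
    exact absurd hux.1 (hv u)

include huniq hwit in
theorem tree_isROT {v : V} (hv : ∀ u, ¬ Fe u v) :
    D.IsROT (TreeSub D Fe hFe_sub v) v := by
  refine ⟨Relation.ReflTransGen.refl, tree_acyclic huniq hv, fun x hx => rtg_tree hx, ?_⟩
  intro x hx hw1
  set T := TreeSub D Fe hFe_sub v with hT
  have hnoout : ∀ c, ¬ Fe x c := fun c hc => by
    have := hwit x c hc; omega
  by_cases hxv : x = v
  · subst hxv
    right
    refine ⟨?_, rfl⟩
    ext z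
    simp only [Set.mem_singleton_iff]
    constructor
    · intro hz
      rcases (hz : Relation.ReflTransGen Fe x z).cases_head with h | ⟨c, hc, _⟩
      · exact h.symm
      · exact absurd hc (hnoout c)
    · rintro rfl
      exact Relation.ReflTransGen.refl
  · left
    refine ⟨?_, hxv⟩
    rcases (hx : Relation.ReflTransGen Fe v x).cases_tail with heq | ⟨z, hz, he⟩
    · exact absurd heq hxv
    have hnbr : T.nbr x = {z} := by
      ext u
      simp only [Set.mem_singleton_iff]
      constructor
      · rintro (h | h)
        · exact absurd h.1 (hnoout u)
        · exact huniq u z x h.1 he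
      · rintro rfl
        exact Or.inr ⟨he, hz⟩
    unfold OSub.deg
    rw [hnbr, Set.ncard_singleton]

end Tree

end StarAux

namespace StarAux

open WOGraph

variable {V : Type} {D : WOGraph V} {Fe : V → V → Prop}
variable {hFe_sub : ∀ a b, Fe a b → D.E a b}

theorem cyc_isUnicycle (huniq : ∀ u u' x : V, Fe u x → Fe u' x → u = u')
    (hwit : ∀ a b : V, Fe a b → 1 < D.w a)
    {q : V} (hq : Per Fe q) :
    D.IsUnicycle (CycSub D Fe hFe_sub {y | Rel Fe q y}) {y | Rel Fe q y} := by
  have hirr : ∀ x, ¬ Fe x x := fun x hx => D.irrefl x (hFe_sub _ _ hx)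
  have hasym : ∀ x y, Fe x y → ¬ Fe y x := fun x y h h' =>
    D.asymm x y (hFe_sub _ _ h) (hFe_sub _ _ h')
  obtain ⟨m, f, hm3, hinj, hrange, hcyc⟩ := orbit_cycle huniq hq hirr hasym
  haveI : NeZero m := ⟨by omega⟩
  have htwo := two_ne_zero_zmod (n := m) hm3
  set O : Set V := {y | Rel Fe q y} with hO
  set B : D.OSub := CycSub D Fe hFe_sub O with hB
  have hOB : O ⊆ B.verts := fun y hy => ⟨y, hy, Relation.ReflTransGen.refl⟩
  have hfO : ∀ i, f i ∈ O := by
    intro i; rw [← hrange]; exact ⟨i, rfl⟩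
  have hBE : ∀ i, B.E (f i) (f (i + 1)) := fun i => ⟨hcyc i, hOB (hfO i)⟩
  have hinN : ∀ (i : ZMod m) (u : V), Fe u (f i) → u = f (i - 1) := by
    intro i u hu
    have h := hcyc (i - 1)
    rw [sub_add_cancel] at h
    exact huniq _ _ _ hu h
  have hOin : ∀ u z : V, B.E u z → z ∈ O → u ∈ O := by
    intro u z huz hz
    rw [← hrange] at hz
    obtain ⟨i, rfl⟩ := hz
    rw [hinN i u huz.1]
    exact hfO _
  have huniqB : ∀ u u' x : V, B.E u x → B.E u' x → u = u' := by
    rintro u u' x ⟨h1, _⟩ ⟨h2, _⟩; exact huniq _ _ _ h1 h2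
  have hGE : ∀ x y : V, B.graph.Adj x y → B.E x y ∨ B.E y x := by
    intro x y hadj
    exact ((SimpleGraph.fromRel_adj _ _ _).mp hadj).2
  -- every cycle of B has support ⊆ O
  have hsupp : ∀ (a : V) (p : B.graph.Walk a a), p.IsCycle → ∀ x ∈ p.support, x ∈ O := by
    intro a p hp
    refine cyc_support_subset (Z := O)
      (ρ := fun x => sInf {n | ∃ z ∈ O, ReachN B.E n z x}) hGE huniqB ?_ hOin p hp
    intro u x hux hxO
    show sInf {n | ∃ z ∈ O, ReachN B.E n z u} < sInf {n | ∃ z ∈ O, ReachN B.E n z x}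
    have hxB : x ∈ B.verts := B.memR _ _ hux
    have hne : Set.Nonempty {n | ∃ z ∈ O, ReachN B.E n z x} := by
      obtain ⟨pt, hpt, hr⟩ := hxB
      obtain ⟨n, hn⟩ := reachN_of_rtg (rtg_cyc hpt hr)
      exact ⟨n, pt, hpt, hn⟩
    have hmem := Nat.sInf_mem hne
    rcases Nat.eq_zero_or_pos (sInf {n | ∃ z ∈ O, ReachN B.E n z x}) with h0 | hpos
    · exfalso
      rw [h0] at hmem
      obtain ⟨z, hz, hzx⟩ := hmem
      have : z = x := hzx
      exact hxO (this ▸ hz)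
    · obtain ⟨c, hc⟩ : ∃ c, sInf {n | ∃ z ∈ O, ReachN B.E n z x} = c + 1 :=
        ⟨sInf {n | ∃ z ∈ O, ReachN B.E n z x} - 1, by omega⟩
      rw [hc] at hmem
      obtain ⟨z0, hz0, z', hz', he'⟩ := hmem
      have hzu : z' = u := huniqB z' u x he' hux
      rw [hzu] at hz'
      have : sInf {n | ∃ z ∈ O, ReachN B.E n z u} ≤ c := Nat.sInf_le ⟨z0, hz0, hz'⟩
      omega
  refine ⟨⟨m, f, hm3, hinj, by rw [hrange], hBE⟩, ?_, ?_, ?_⟩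
  · -- every cycle has support exactly O
    intro a p hp
    have hsub := hsupp a p hp
    have hstart : a ∈ O := hsub a p.start_mem_support
    have hstart' : a ∈ Set.range f := by rwa [hrange]
    obtain ⟨j0, hj0⟩ := hstart'
    have hind : ∀ k : ℕ, f (j0 + (k : ZMod m)) ∈ p.support := by
      intro k
      induction k with
      | zero => simpa [hj0] using p.start_mem_support
      | succ k ih =>
        obtain ⟨b, c, hbc, hab, hac, hbs, hcs⟩ := cycle_two_nbrs hp ih
        have hclass : ∀ u, B.graph.Adj (f (j0 + (k : ZMod m))) u → u ∈ p.support →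
            u = f (j0 + (k : ZMod m) - 1) ∨ u = f (j0 + (k : ZMod m) + 1) := by
          intro u hadj hus
          have huO : u ∈ Set.range f := by rw [hrange]; exact hsub u hus
          obtain ⟨ju, rfl⟩ := huO
          rcases hGE _ _ hadj with h | h
          · have hx : f (j0 + (k : ZMod m)) = f (ju - 1) := hinN ju _ h.1
            have h1 : ju - 1 = j0 + (k : ZMod m) := (hinj hx).symm
            have h2 : ju = j0 + (k : ZMod m) + 1 := sub_eq_iff_eq_add.mp h1
            right
            rw [h2]
          · left
            exact hinN _ _ h.1
        have hneq : f (j0 + (k : ZMod m) - 1) ≠ f (j0 + (k : ZMod m) + 1) := by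
          intro h
          have h1 := hinj h
          have h2 : (2 : ZMod m) = 0 := by
            have h3 : (j0 + (k : ZMod m) + 1) - (j0 + (k : ZMod m) - 1) = 0 := by
              rw [← h1]; ring
            calc (2 : ZMod m) = (j0 + (k : ZMod m) + 1) - (j0 + (k : ZMod m) - 1) := by ring
              _ = 0 := h3
          exact htwo h2
        have hgoal : f (j0 + (k : ZMod m) + 1) ∈ p.support := by
          rcases hclass b hab hbs with hb | hb
          · rcases hclass c hac hcs with hc | hc
            · exact absurd (hb.trans hc.symm) hbc
            · exact hc ▸ hcs
          · exact hb ▸ hbs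
        have hcast : ((k + 1 : ℕ) : ZMod m) = (k : ZMod m) + 1 := by push_cast; ring
        rw [hcast, ← add_assoc]
        exact hgoal
    ext y
    simp only [Set.mem_setOf_eq]
    constructor
    · exact hsub y
    · intro hy
      have hy' : y ∈ Set.range f := by rwa [hrange]
      obtain ⟨jy, rfl⟩ := hy'
      have h1 : (((jy - j0).val : ℕ) : ZMod m) = jy - j0 := ZMod.natCast_rightInverse _
      have h2 := hind (jy - j0).val
      rw [h1] at h2
      rwa [show j0 + (jy - j0) = jy by ring] at h2
  · -- reachability from the cycle
    rintro y ⟨pt, hpt, hr⟩ _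
    exact ⟨pt, hpt, rtg_cyc hpt hr⟩
  · -- weight-one vertices have degree one
    intro x hx hw1
    have hnoout : ∀ c, ¬ Fe x c := fun c hc => by have := hwit x c hc; omega
    have hxO : x ∉ O := by
      intro hxO
      rw [← hrange] at hxO
      obtain ⟨i, rfl⟩ := hxO
      exact hnoout _ (hcyc i)
    obtain ⟨pt, hpt, hr⟩ := hx
    rcases hr.cases_tail with heq | ⟨z, hz, he⟩
    · exact absurd (heq ▸ hpt) hxO
    have hnbr : B.nbr x = {z} := by
      ext u
      simp only [Set.mem_singleton_iff]
      constructor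
      · rintro (h | h)
        · exact absurd h.1 (hnoout u)
        · exact huniq u z x h.1 he
      · rintro rfl
        exact Or.inr ⟨he, pt, hpt, hz⟩
    unfold OSub.deg
    rw [hnbr, Set.ncard_singleton]

end StarAux

namespace StarAux

open WOGraph

variable {V : Type} {D : WOGraph V} {Fe : V → V → Prop}
variable {hFe_sub : ∀ a b, Fe a b → D.E a b}

section Disj

variable (huniq : ∀ u u' x : V, Fe u x → Fe u' x → u = u')

include huniq in
theorem desc_desc_disj {v v' : V} (hv : ∀ u, ¬ Fe u v) (hv' : ∀ u, ¬ Fe u v')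
    (hne : v ≠ v') : Disjoint (Desc Fe v) (Desc Fe v') := by
  rw [Set.disjoint_left]
  intro x hx hx'
  obtain ⟨n, hn⟩ := reachN_of_rtg (hx : Relation.ReflTransGen Fe v x)
  obtain ⟨n', hn'⟩ := reachN_of_rtg (hx' : Relation.ReflTransGen Fe v' x)
  rcases le_total n n' with h | h
  · exact hne (root_unique huniq hv hn hn' h).symm
  · exact hne (root_unique huniq hv' hn' hn h)

include huniq in
theorem per_no_root {p : V} (hp : Per Fe p) : ∃ u, Fe u p := by
  obtain ⟨z, hz, _⟩ := per_in_edge hp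
  exact ⟨z, hz⟩

include huniq in
theorem desc_descO_disj {v : V} (hv : ∀ u, ¬ Fe u v) {p : V} (hp : Per Fe p) :
    Disjoint (Desc Fe v) (DescO Fe {y | Rel Fe p y}) := by
  rw [Set.disjoint_left]
  rintro x hx ⟨pt, hptO, hr⟩
  have hptPer : Per Fe pt := per_of_rel hp hptO
  obtain ⟨n, hn⟩ := reachN_of_rtg (hx : Relation.ReflTransGen Fe v x)
  obtain ⟨n', hn'⟩ := reachN_of_rtg hr
  rcases le_total n n' with h | h
  · have heq : pt = v := root_unique huniq hv hn hn' h
    obtain ⟨z, hz⟩ := per_no_root huniq (heq ▸ hptPer)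
    exact hv z hz
  · have hd := reachN_diff huniq hn' hn h
    have hrel : Rel Fe pt v := anc_per_orbit huniq hptPer hd
    have hvPer : Per Fe v := per_of_rel hptPer hrel
    obtain ⟨z, hz⟩ := per_no_root huniq hvPer
    exact hv z hz

include huniq in
theorem descO_descO_eq {p p' : V} (hp : Per Fe p) (hp' : Per Fe p') {x : V}
    (hx : x ∈ DescO Fe {y | Rel Fe p y}) (hx' : x ∈ DescO Fe {y | Rel Fe p' y}) :
    {y | Rel Fe p y} = {y | Rel Fe p' y} := by
  obtain ⟨pt, hpt, hr⟩ := hx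
  obtain ⟨pt', hpt', hr'⟩ := hx'
  have hptPer : Per Fe pt := per_of_rel hp hpt
  have hpt'Per : Per Fe pt' := per_of_rel hp' hpt'
  obtain ⟨n, hn⟩ := reachN_of_rtg hr
  obtain ⟨n', hn'⟩ := reachN_of_rtg hr'
  have hrel : Rel Fe pt pt' := by
    rcases le_total n n' with h | h
    · exact anc_per_orbit huniq hptPer (reachN_diff huniq hn hn' h)
    · exact rel_symm (anc_per_orbit huniq hpt'Per (reachN_diff huniq hn' hn h))
  have hpp' : Rel Fe p p' :=
    rel_trans (hpt : Rel Fe p pt) (rel_trans hrel (rel_symm (hpt' : Rel Fe p' pt')))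
  ext y
  simp only [Set.mem_setOf_eq]
  exact ⟨fun h => rel_trans (rel_symm hpp') h, fun h => rel_trans hpp' h⟩

include huniq in
theorem cover_class [Finite V] {K : D.OSub} (hFe_K : ∀ a b : V, Fe a b → a ∈ K.verts ∧ b ∈ K.verts)
    {x : V} (hx : x ∈ K.verts) :
    (∃ v, (v ∈ K.verts ∧ ∀ u, ¬ Fe u v) ∧ x ∈ Desc Fe v) ∨
      (∃ p, Per Fe p ∧ x ∈ DescO Fe {y | Rel Fe p y}) := by
  classical
  by_cases hall : ∀ n, ∃ y, ReachN Fe n y x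
  · right
    have key : ∀ a b : ℕ, a < b → (hall a).choose = (hall b).choose →
        ∃ p, Per Fe p ∧ x ∈ DescO Fe {y | Rel Fe p y} := by
      intro a b hab heq
      have ha := (hall a).choose_spec
      have hb := (hall b).choose_spec
      rw [heq] at ha
      have hd := reachN_diff huniq ha hb (le_of_lt hab)
      refine ⟨(hall b).choose, ⟨b - a, by omega, hd⟩, (hall b).choose, rel_refl _,
        rtg_of_reachN ha⟩
    obtain ⟨a, b, hne, heq⟩ :=
      Finite.exists_ne_map_eq_of_infinite (fun n : ℕ => (hall n).choose)
    rcases Ne.lt_or_gt hne with h | h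
    · exact key a b h heq
    · exact key b a h heq.symm
  · left
    push_neg at hall
    obtain ⟨n, hn⟩ := hall
    have hP : ∃ n, ∀ y, ¬ ReachN Fe n y x := ⟨n, hn⟩
    haveI : DecidablePred (fun n => ∀ y, ¬ ReachN Fe n y x) := Classical.decPred _
    set n₁ := Nat.find hP with hn₁
    have hspec : ∀ y, ¬ ReachN Fe n₁ y x := Nat.find_spec hP
    have hne0 : n₁ ≠ 0 := by
      intro h0
      exact hspec x (by rw [h0]; rfl)
    obtain ⟨N, hN⟩ : ∃ N, n₁ = N + 1 := ⟨n₁ - 1, by omega⟩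
    have hNlt : N < n₁ := by omega
    have hNex : ∃ y, ReachN Fe N y x := by
      have := Nat.find_min hP hNlt
      push_neg at this
      exact this
    obtain ⟨y, hy⟩ := hNex
    have hroot : ∀ u, ¬ Fe u y := by
      intro u hu
      have h1 : ReachN Fe 1 u y := ⟨u, rfl, hu⟩
      have h2 : ReachN Fe (1 + N) u x := h1.concat hy
      rw [Nat.add_comm, ← hN] at h2
      exact hspec u h2
    have hyK : y ∈ K.verts := by
      rcases Nat.eq_zero_or_pos N with h0 | hpos
      · rw [h0] at hy
        have : y = x := hy
        rwa [this]
      · obtain ⟨N', hN'⟩ : ∃ N', N = N' + 1 := ⟨N - 1, by omega⟩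
        rw [hN'] at hy
        obtain ⟨z, hz, _⟩ := reachN_head hy
        exact (hFe_K y z hz).1
    exact ⟨y, ⟨hyK, hroot⟩, rtg_of_reachN hy⟩

end Disj

end StarAux

namespace StarAux

open WOGraph

set_option maxHeartbeats 1000000 in
theorem svc_to_ssf {V : Type} [Fintype V] (D : WOGraph V) (K : D.OSub) (C : Set V)
    (hC : D.IsStrongVC C) (hKC : K.verts ⊆ C) : D.HasGenSSF K := by
  classical
  -- choice of an outside-C neighbour, when one exists
  have hchO : ∀ v : V, ∃ u : V, (∃ u', (D.E v u' ∨ D.E u' v) ∧ u' ∉ C) →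
      ((D.E v u ∨ D.E u v) ∧ u ∉ C) := by
    intro v
    by_cases h : ∃ u', (D.E v u' ∨ D.E u' v) ∧ u' ∉ C
    · obtain ⟨u, hu⟩ := h
      exact ⟨u, fun _ => hu⟩
    · exact ⟨v, fun hc => absurd hc h⟩
  choose uO huO using hchO
  -- strong witness for vertices of K with no neighbour outside C
  have hwitex : ∀ v, v ∈ K.verts → (¬ ∃ u, (D.E v u ∨ D.E u v) ∧ u ∉ C) →
      ∃ y, D.E y v ∧ y ∈ C ∧ y ∉ D.L1 C ∧ 1 < D.w y := by
    intro v hv hno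
    apply hC.2
    refine ⟨hKC hv, ?_, ?_⟩
    · rintro ⟨_, y, hy, hyC⟩
      exact hno ⟨y, Or.inl hy, hyC⟩
    · rintro ⟨_, _, y, hy, hyC⟩
      exact hno ⟨y, Or.inr hy, hyC⟩
  have hchG : ∀ v : V, ∃ y : V,
      (v ∈ K.verts ∧ ¬ ∃ u, (D.E v u ∨ D.E u v) ∧ u ∉ C) →
      (D.E y v ∧ y ∈ C ∧ y ∉ D.L1 C ∧ 1 < D.w y) := by
    intro v
    by_cases h : v ∈ K.verts ∧ ¬ ∃ u, (D.E v u ∨ D.E u v) ∧ u ∉ C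
    · obtain ⟨y, hy⟩ := hwitex v h.1 h.2
      exact ⟨y, fun _ => hy⟩
    · exact ⟨v, fun hc => absurd hc h⟩
  choose gv hgv using hchG
  -- the functional digraph of internal witnesses
  set Fe : V → V → Prop := fun a b =>
    (b ∈ K.verts ∧ (¬ ∃ u, (D.E b u ∨ D.E u b) ∧ u ∉ C) ∧ gv b ∈ K.verts) ∧ a = gv b
    with hFe
  have hFe_sub : ∀ a b, Fe a b → D.E a b := by
    rintro a b ⟨hb, rfl⟩
    exact (hgv b ⟨hb.1, hb.2.1⟩).1
  have huniq : ∀ u u' x : V, Fe u x → Fe u' x → u = u' := by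
    rintro u u' x ⟨_, rfl⟩ ⟨_, rfl⟩
    rfl
  have hFe_K : ∀ a b : V, Fe a b → a ∈ K.verts ∧ b ∈ K.verts := by
    rintro a b ⟨hb, rfl⟩
    exact ⟨hb.2.2, hb.1⟩
  have hFe_w : ∀ a b : V, Fe a b → 1 < D.w a := by
    rintro a b ⟨hb, rfl⟩
    exact (hgv b ⟨hb.1, hb.2.1⟩).2.2.2
  have hFe_CnL1 : ∀ a b : V, Fe a b → a ∈ C ∧ a ∉ D.L1 C := by
    rintro a b ⟨hb, rfl⟩
    exact ⟨(hgv b ⟨hb.1, hb.2.1⟩).2.1, (hgv b ⟨hb.1, hb.2.1⟩).2.2.1⟩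
  have hchainK : ∀ pt : V, pt ∈ K.verts → ∀ x, Relation.ReflTransGen Fe pt x → x ∈ K.verts := by
    intro pt hpt x hx
    induction hx with
    | refl => exact hpt
    | tail _ he ih => exact (hFe_K _ _ he).2
  -- roots and orbits
  set Roots : Set V := {v | v ∈ K.verts ∧ ∀ u, ¬ Fe u v} with hRoots
  set Orbits : Set (Set V) := {O | ∃ p, Per Fe p ∧ O = {y | Rel Fe p y}} with hOrbits
  haveI : Fintype ↥Roots := Fintype.ofFinite _
  haveI : Fintype ↥Orbits := Fintype.ofFinite _
  set r : ℕ := Fintype.card ↥Roots with hr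
  set s : ℕ := Fintype.card ↥Orbits with hs
  set eT : ↥Roots ≃ Fin r := Fintype.equivFin ↥Roots with heT
  set eB : ↥Orbits ≃ Fin s := Fintype.equivFin ↥Orbits with heB
  set vT : Fin r → V := fun i => ((eT.symm i : ↥Roots) : V) with hvT
  set OB : Fin s → Set V := fun j => ((eB.symm j : ↥Orbits) : Set V) with hOB
  have hvTR : ∀ i, vT i ∈ Roots := fun i => (eT.symm i).2
  have hvT_inj : Function.Injective vT := by
    intro i j h
    have h2 : eT.symm i = eT.symm j := Subtype.val_injective h
    exact eT.symm.injective h2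
  have hOBmem : ∀ j, OB j ∈ Orbits := fun j => (eB.symm j).2
  have hOB_inj : Function.Injective OB := by
    intro i j h
    have h2 : eB.symm i = eB.symm j := Subtype.val_injective h
    exact eB.symm.injective h2
  have hOBper : ∀ j, ∃ p, Per Fe p ∧ OB j = {y | Rel Fe p y} := fun j => hOBmem j
  choose pj hpjPer hpjO using hOBper
  -- the generating subgraph H
  set H : D.OSub :=
    ⟨K.verts, Fe, hFe_sub, fun a b h => (hFe_K a b h).1, fun a b h => (hFe_K a b h).2⟩ with hH
  refine ⟨H, ⟨?_⟩, rfl⟩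
  -- coverage of K.verts by the components
  have hcover : ∀ x ∈ K.verts, (∃ i, x ∈ Desc Fe (vT i)) ∨ (∃ j, x ∈ DescO Fe (OB j)) := by
    intro x hx
    rcases cover_class huniq hFe_K hx with ⟨v, hv, hxv⟩ | ⟨p, hp, hxp⟩
    · left
      refine ⟨eT ⟨v, hv⟩, ?_⟩
      have hveq : vT (eT ⟨v, hv⟩) = v := by
        simp only [hvT, Equiv.symm_apply_apply]
      rwa [hveq]
    · right
      have hO : {y | Rel Fe p y} ∈ Orbits := ⟨p, hp, rfl⟩
      refine ⟨eB ⟨_, hO⟩, ?_⟩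
      have hOeq : OB (eB ⟨_, hO⟩) = {y | Rel Fe p y} := by
        simp only [hOB, Equiv.symm_apply_apply]
      rwa [hOeq]
  have hdescK : ∀ i, Desc Fe (vT i) ⊆ K.verts :=
    fun i x hx => hchainK (vT i) (hvTR i).1 x hx
  have hOBK : ∀ j, ∀ y ∈ OB j, y ∈ K.verts := by
    intro j y hy
    rw [hpjO j] at hy
    have hyPer : Per Fe y := per_of_rel (hpjPer j) hy
    obtain ⟨u, hu⟩ := per_no_root huniq hyPer
    exact (hFe_K _ _ hu).2
  have hdescOK : ∀ j, DescO Fe (OB j) ⊆ K.verts := by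
    rintro j x ⟨pt, hpt, hr⟩
    exact hchainK pt (hOBK j pt hpt) x hr
  -- the ⋆-semi-forest structure
  have hrootO : ∀ i, (∃ u, (D.E (vT i) u ∨ D.E u (vT i)) ∧ u ∉ C) ∨ gv (vT i) ∉ K.verts := by
    intro i
    by_cases h : ∃ u, (D.E (vT i) u ∨ D.E u (vT i)) ∧ u ∉ C
    · exact Or.inl h
    · by_cases h2 : gv (vT i) ∈ K.verts
      · exfalso
        exact (hvTR i).2 (gv (vT i)) ⟨⟨(hvTR i).1, h, h2⟩, rfl⟩
      · exact Or.inr h2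
  have hchW : ∀ i : Fin r, ∃ w : V,
      ((∃ u, (D.E (vT i) u ∨ D.E u (vT i)) ∧ u ∉ C) →
        ((D.E (vT i) w ∨ D.E w (vT i)) ∧ w ∉ C)) ∧
      ((¬ ∃ u, (D.E (vT i) u ∨ D.E u (vT i)) ∧ u ∉ C) → w = gv (vT i)) := by
    intro i
    by_cases h : ∃ u, (D.E (vT i) u ∨ D.E u (vT i)) ∧ u ∉ C
    · exact ⟨uO (vT i), fun _ => huO _ h, fun hc => absurd h hc⟩
    · exact ⟨gv (vT i), fun hc => absurd hc h, fun _ => rfl⟩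
  choose wv hwvO hwvI using hchW
  -- facts about gv at roots with no outside neighbour
  have hgvroot : ∀ i, (¬ ∃ u, (D.E (vT i) u ∨ D.E u (vT i)) ∧ u ∉ C) →
      (D.E (gv (vT i)) (vT i) ∧ gv (vT i) ∈ C ∧ gv (vT i) ∉ D.L1 C ∧
        1 < D.w (gv (vT i)) ∧ gv (vT i) ∉ K.verts) := by
    intro i h
    have h2 := hgv (vT i) ⟨(hvTR i).1, h⟩
    rcases hrootO i with h3 | h3
    · exact absurd h3 h
    · exact ⟨h2.1, h2.2.1, h2.2.2.1, h2.2.2.2, h3⟩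
  refine
    { r := r
      s := s
      T := fun i => TreeSub D Fe hFe_sub (vT i)
      parent := vT
      B := fun j => CycSub D Fe hFe_sub (OB j)
      Cs := OB
      hT := fun i => tree_isROT huniq hFe_w (fun u => (hvTR i).2 u)
      hB := fun j => by
        show D.IsUnicycle (CycSub D Fe hFe_sub (OB j)) (OB j)
        rw [hpjO j]
        exact cyc_isUnicycle (hFe_sub := hFe_sub) huniq hFe_w (hpjPer j)
      hverts := ?_
      hE := ?_
      hTT := fun i i' hne =>
        desc_desc_disj huniq (fun u => (hvTR i).2 u) (fun u => (hvTR i').2 u)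
          (fun h => hne (hvT_inj h))
      hBB := ?_
      hTB := fun i j => by
        show Disjoint (Desc Fe (vT i)) (DescO Fe (OB j))
        rw [hpjO j]
        exact desc_descO_disj huniq (fun u => (hvTR i).2 u) (hpjPer j)
      wv := wv
      hwv_not := ?_
      hwv_nbr := ?_
      W1 := Set.range wv ∩ {x | x ∉ C}
      W2 := Set.range wv ∩ C
      hW_union := ?_
      hW_disj := ?_
      hW1_stable := ?_
      hW2_plus := ?_
      hW2_edge := ?_
      hW1_out := ?_ }
  · -- hverts
    apply Set.eq_of_subset_of_subset
    · intro x hx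
      rcases hcover x hx with ⟨i, hi⟩ | ⟨j, hj⟩
      · exact Or.inl (Set.mem_iUnion.mpr ⟨i, hi⟩)
      · exact Or.inr (Set.mem_iUnion.mpr ⟨j, hj⟩)
    · rintro x (hx | hx)
      · obtain ⟨i, hi⟩ := Set.mem_iUnion.mp hx
        exact hdescK i hi
      · obtain ⟨j, hj⟩ := Set.mem_iUnion.mp hx
        exact hdescOK j hj
  · -- hE
    intro u v
    constructor
    · intro h
      rcases hcover u (hFe_K u v h).1 with ⟨i, hi⟩ | ⟨j, hj⟩
      · exact Or.inl ⟨i, h, hi⟩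
      · exact Or.inr ⟨j, h, hj⟩
    · rintro (⟨i, h, _⟩ | ⟨j, h, _⟩) <;> exact h
  · -- hBB
    intro j j' hne
    rw [Set.disjoint_left]
    intro x hx hx'
    have hx2 : x ∈ DescO Fe {y | Rel Fe (pj j) y} := by rwa [← hpjO j]
    have hx2' : x ∈ DescO Fe {y | Rel Fe (pj j') y} := by rwa [← hpjO j']
    have heq := descO_descO_eq huniq (hpjPer j) (hpjPer j') hx2 hx2'
    apply hne
    apply hOB_inj
    rw [hpjO j, hpjO j', heq]
  · -- hwv_not
    intro i hmem
    by_cases h : ∃ u, (D.E (vT i) u ∨ D.E u (vT i)) ∧ u ∉ C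
    · exact (hwvO i h).2 (hKC hmem)
    · rw [hwvI i h] at hmem
      exact (hgvroot i h).2.2.2.2 hmem
  · -- hwv_nbr
    intro i
    by_cases h : ∃ u, (D.E (vT i) u ∨ D.E u (vT i)) ∧ u ∉ C
    · exact (hwvO i h).1
    · rw [hwvI i h]
      exact Or.inr (hgvroot i h).1
  · -- hW_union
    apply Set.eq_of_subset_of_subset
    · rintro x (hx | hx) <;> exact hx.1
    · intro x hx
      by_cases h : x ∈ C
      · exact Or.inr ⟨hx, h⟩
      · exact Or.inl ⟨hx, h⟩
  · -- hW_disj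
    rw [Set.disjoint_left]
    rintro x ⟨_, hnC⟩ ⟨_, hC'⟩
    exact hnC hC'
  · -- hW1_stable
    rintro x ⟨_, hx⟩ y ⟨_, hy⟩ hadj
    rw [WOGraph.graph, SimpleGraph.fromRel_adj] at hadj
    rcases hadj.2 with h | h
    · rcases hC.1 x y h with hc | hc
      · exact hx hc
      · exact hy hc
    · rcases hC.1 y x h with hc | hc
      · exact hy hc
      · exact hx hc
  · -- hW2_plus
    rintro x ⟨⟨i, rfl⟩, hxC⟩
    by_cases h : ∃ u, (D.E (vT i) u ∨ D.E u (vT i)) ∧ u ∉ C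
    · exact absurd hxC (hwvO i h).2
    · rw [hwvI i h]
      exact (hgvroot i h).2.2.2.1
  · -- hW2_edge
    intro i hmem
    by_cases h : ∃ u, (D.E (vT i) u ∨ D.E u (vT i)) ∧ u ∉ C
    · exact absurd hmem.2 (hwvO i h).2
    · rw [hwvI i h]
      exact (hgvroot i h).1
  · -- hW1_out
    rw [Set.eq_empty_iff_forall_notMem]
    rintro x ⟨⟨a, ha, hax⟩, ⟨_, hxnC⟩⟩
    have hkey : a ∈ C ∧ a ∉ D.L1 C := by
      rcases ha with ⟨⟨i, rfl⟩, haC⟩ | hatil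
      · by_cases h : ∃ u, (D.E (vT i) u ∨ D.E u (vT i)) ∧ u ∉ C
        · exact absurd haC (hwvO i h).2
        · rw [hwvI i h] at haC ⊢
          exact ⟨haC, (hgvroot i h).2.2.1⟩
      · have hdeg1 : ∃ b, Fe a b ∨ Fe b a := by
          have hne : Set.Nonempty (H.nbr a) := by
            apply Set.nonempty_of_ncard_ne_zero
            have hd : H.deg a = (H.nbr a).ncard := rfl
            rcases hatil with ⟨_, hdeg⟩ | ⟨_, hdeg⟩ <;> omega
          obtain ⟨b, hb⟩ := hne
          have hb' : H.E a b ∨ H.E b a := hb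
          exact ⟨b, hb'⟩
        obtain ⟨b, hb | hb⟩ := hdeg1
        · exact hFe_CnL1 a b hb
        · have hIa := hb.1
          refine ⟨hKC hIa.1, ?_⟩
          rintro ⟨_, z, haz, hzC⟩
          exact hIa.2.1 ⟨z, Or.inl haz, hzC⟩
    exact hxnC (by
      by_contra hxC
      exact hkey.2 ⟨hkey.1, x, hax, hxC⟩)

end StarAux

/-- Theorem `theorem-oct29`. -/
theorem stmt3 {V : Type} [Fintype V] (D : WOGraph V) (K : D.OSub)
    (hK : WOGraph.IsInducedSub K) :
    (∃ C : Set V, D.IsStrongVC C ∧ K.verts ⊆ C) ↔ WOGraph.HasGenSSF D K := by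
  constructor
  · rintro ⟨C, hC, hKC⟩
    exact StarAux.svc_to_ssf D K C hC hKC
  · exact StarAux.ssf_to_svc D K
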